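/- arXiv:math/0503233 — 5 statements merged into one kernel-verified Lean document; each statement's English description precedes it below -/
import Mathlib

section
/- Let n ≥ 1 and a ≥ 1 be integers and let π be a permutation of {1,…,n} with exactly d descents. Then the number of sequences (a_1,…,a_n) with 0 ≤ a_i < a whose associated permutation is π equals the binomial coefficient C(a + n − d − 1, n). Consequently, if all a^n such sequences are equally likely (the maximum entropy a-shuffle), the probability that the a-shuffle results in π is C(a + n − d − 1, n)/a^n. -/
/-- Number of descents of a sequence `f` of length `n`: the number of adjacent
pairs of positions `(i, i+1)` with `f (i+1) < f i`. -/
def des {n : ℕ} {α : Type*} [LinearOrder α] (f : Fin n → α) : ℕ :=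
  ((Finset.univ : Finset (Fin n × Fin n)).filter
    (fun p => (p.1 : ℕ) + 1 = (p.2 : ℕ) ∧ f p.2 < f p.1)).card

/-- `π` is the permutation associated to the sequence `w` by stable sorting:
`π(k) = i_k` where `w i_1 ≤ ⋯ ≤ w i_n` with ties broken by `i_j < i_{j+1}`. -/
def IsAssoc {n a : ℕ} (w : Fin n → Fin a) (π : Equiv.Perm (Fin n)) : Prop :=
  ∀ j k : Fin n, j < k → w (π j) < w (π k) ∨ (w (π j) = w (π k) ∧ π j < π k)

instance {n a : ℕ} (w : Fin n → Fin a) (π : Equiv.Perm (Fin n)) :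
    Decidable (IsAssoc w π) := by unfold IsAssoc; infer_instance

section Aux

/-- Set of descent positions of `π`. -/
def dset {n : ℕ} (π : Equiv.Perm (Fin n)) : Finset (Fin n) :=
  Finset.univ.filter (fun i => ∃ h : i.val + 1 < n, π ⟨(i : ℕ) + 1, h⟩ < π i)

/-- Number of descent positions strictly below `k`. -/
def Dc {n : ℕ} (π : Equiv.Perm (Fin n)) (k : ℕ) : ℕ :=
  ((dset π).filter (fun i => i.val < k)).card

variable {n : ℕ} (π : Equiv.Perm (Fin n))

lemma des_eq_dset_card : des (fun i => π i) = (dset π).card := by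
  unfold des
  refine Finset.card_bij (fun p _ => p.1) ?_ ?_ ?_
  · rintro ⟨p1, p2⟩ hp
    simp only [Finset.mem_filter, Finset.mem_univ, true_and] at hp
    obtain ⟨h1, h2⟩ := hp
    simp only [dset, Finset.mem_filter, Finset.mem_univ, true_and]
    refine ⟨by omega, ?_⟩
    have : (⟨(p1 : ℕ) + 1, by omega⟩ : Fin n) = p2 := by
      apply Fin.ext; simp [h1]
    rw [this]; exact h2
  · rintro ⟨p1, p2⟩ hp ⟨q1, q2⟩ hq h
    simp only [Finset.mem_filter, Finset.mem_univ, true_and] at hp hq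
    simp only at h
    subst h
    have : p2 = q2 := Fin.ext (by omega)
    simp [this]
  · intro i hi
    simp only [dset, Finset.mem_filter, Finset.mem_univ, true_and] at hi
    obtain ⟨h, hlt⟩ := hi
    exact ⟨(i, ⟨(i : ℕ) + 1, h⟩), by simp [hlt], rfl⟩

lemma Dc_le_self (k : ℕ) : Dc π k ≤ k := by
  unfold Dc
  calc ((dset π).filter (fun i => i.val < k)).card
      ≤ (Finset.range k).card := by
        apply Finset.card_le_card_of_injOn (fun i => i.val)
        · intro i hi
          simp only [Finset.mem_coe, Finset.mem_filter] at hi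
          simp [hi.2]
        · intro i _ j _ h
          exact Fin.ext h
    _ = k := Finset.card_range k

lemma Dc_le_card (k : ℕ) : Dc π k ≤ (dset π).card := Finset.card_filter_le _ _

lemma Dc_succ (k : ℕ) (hk : k < n) :
    Dc π (k + 1) = Dc π k +
      (if (∃ h : k + 1 < n, π ⟨k + 1, h⟩ < π ⟨k, hk⟩) then 1 else 0) := by
  classical
  unfold Dc
  have hsp : (dset π).filter (fun i => i.val < k + 1)
      = (dset π).filter (fun i => i.val < k) ∪ (dset π).filter (fun i => i.val = k) := by
    rw [← Finset.filter_or]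
    apply Finset.filter_congr
    intro i _
    constructor
    · intro h; omega
    · intro h; omega
  rw [hsp, Finset.card_union_of_disjoint]
  · congr 1
    by_cases hdesc : ∃ h : k + 1 < n, π ⟨k + 1, h⟩ < π ⟨k, hk⟩
    · rw [if_pos hdesc]
      have : (dset π).filter (fun i => i.val = k) = {⟨k, hk⟩} := by
        apply Finset.ext
        intro i
        simp only [Finset.mem_filter, Finset.mem_singleton, dset, Finset.mem_univ, true_and]
        constructor
        · rintro ⟨_, h2⟩; exact Fin.ext h2
        · rintro rfl
          exact ⟨hdesc, rfl⟩
      rw [this, Finset.card_singleton]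
    · rw [if_neg hdesc]
      have : (dset π).filter (fun i => i.val = k) = ∅ := by
        apply Finset.ext
        intro i
        simp only [Finset.mem_filter, Finset.notMem_empty, iff_false, not_and, dset,
          Finset.mem_univ, true_and]
        intro hmem hik
        apply hdesc
        have : i = ⟨k, hk⟩ := Fin.ext hik
        rw [this] at hmem
        exact hmem
      rw [this, Finset.card_empty]
  · rw [Finset.disjoint_filter]
    intro i _ h1 h2
    omega

lemma Dc_bound (k : ℕ) (hk : k < n) : k + (dset π).card ≤ n - 1 + Dc π k := by
  classical
  have hsplit : Dc π k + ((dset π).filter (fun i => ¬ i.val < k)).card = (dset π).card :=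
    Finset.card_filter_add_card_filter_not _
  have hrest : ((dset π).filter (fun i => ¬ i.val < k)).card ≤ (n - 1) - k := by
    calc ((dset π).filter (fun i => ¬ i.val < k)).card
        ≤ (Finset.Ico k (n - 1)).card := by
          apply Finset.card_le_card_of_injOn (fun i => i.val)
          · intro i hi
            simp only [Finset.mem_coe, Finset.mem_filter, dset, Finset.mem_univ, true_and] at hi
            obtain ⟨⟨h1, _⟩, h2⟩ := hi
            simp only [Finset.mem_coe, Finset.mem_Ico]
            omega
          · intro i _ j _ h
            exact Fin.ext h
      _ = (n - 1) - k := Nat.card_Ico k (n - 1)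
  omega

lemma dset_card_le (hn : 1 ≤ n) : (dset π).card ≤ n - 1 := by
  have hb := Dc_bound π 0 (by omega)
  have h0 : Dc π 0 = 0 := by
    unfold Dc
    rw [Finset.card_eq_zero]
    apply Finset.filter_false_of_mem
    intro i _
    omega
  omega

/-- gap lemma for strictly monotone `Fin` functions. -/
lemma chain_gap {N M : ℕ} (u : Fin N → Fin M) (hu : StrictMono u) :
    ∀ (kv : ℕ) (hk : kv < N) (jv : ℕ) (_ : jv ≤ kv),
      (u ⟨jv, by omega⟩ : ℕ) + (kv - jv) ≤ u ⟨kv, hk⟩ := by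
  intro kv
  induction kv with
  | zero => intro hk jv hj; interval_cases jv; simp
  | succ k ih =>
    intro hk jv hj
    by_cases hcase : jv = k + 1
    · subst hcase; simp
    · have hj' : jv ≤ k := by omega
      have hlt : u ⟨k, by omega⟩ < u ⟨k + 1, hk⟩ := hu (by simp [Fin.lt_def])
      have := ih (by omega) jv hj'
      have hv : (u ⟨k, by omega⟩ : ℕ) < (u ⟨k + 1, hk⟩ : ℕ) := hlt
      omega

lemma strictMono_of_chain {N : ℕ} {α : Type*} [Preorder α] (f : Fin N → α)
    (h : ∀ (k : ℕ) (hk : k + 1 < N), f ⟨k, by omega⟩ < f ⟨k + 1, hk⟩) : StrictMono f := by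
  have key : ∀ (kv : ℕ) (hk : kv < N) (jv : ℕ) (_ : jv < kv),
      f ⟨jv, by omega⟩ < f ⟨kv, hk⟩ := by
    intro kv
    induction kv with
    | zero => omega
    | succ k ih =>
      intro hk jv hj
      by_cases hcase : jv = k
      · subst hcase; exact h jv hk
      · exact lt_trans (ih (by omega) jv (by omega)) (h k hk)
  intro j k hjk
  have := key k.val k.isLt j.val hjk
  simpa using this

lemma isAssoc_iff_local {a : ℕ} (w : Fin n → Fin a) :
    IsAssoc w π ↔ ∀ (k : ℕ) (hk : k + 1 < n),
      w (π ⟨k, by omega⟩) ≤ w (π ⟨k + 1, hk⟩) ∧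
      (π ⟨k + 1, hk⟩ < π ⟨k, by omega⟩ → w (π ⟨k, by omega⟩) < w (π ⟨k + 1, hk⟩)) := by
  constructor
  · intro H k hk
    have := H ⟨k, by omega⟩ ⟨k + 1, hk⟩ (by simp [Fin.lt_def])
    rcases this with h | ⟨h1, h2⟩
    · exact ⟨le_of_lt h, fun _ => h⟩
    · exact ⟨le_of_eq h1, fun hlt => absurd h2 (not_lt.mpr (le_of_lt hlt))⟩
  · intro H j k hjk
    have key : ∀ (kv : ℕ) (hk : kv < n) (jv : ℕ) (_ : jv < kv),
        w (π ⟨jv, by omega⟩) < w (π ⟨kv, hk⟩) ∨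
        (w (π ⟨jv, by omega⟩) = w (π ⟨kv, hk⟩) ∧ π ⟨jv, by omega⟩ < π ⟨kv, hk⟩) := by
      intro kv
      induction kv with
      | zero => omega
      | succ m ih =>
        intro hk jv hj
        have hm : m < n := by omega
        obtain ⟨hle, hstrict⟩ := H m hk
        have hstep : w (π ⟨m, hm⟩) < w (π ⟨m + 1, hk⟩) ∨
            (w (π ⟨m, hm⟩) = w (π ⟨m + 1, hk⟩) ∧ π ⟨m, hm⟩ < π ⟨m + 1, hk⟩) := by
          rcases lt_or_eq_of_le hle with h | h
          · exact Or.inl h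
          · refine Or.inr ⟨h, ?_⟩
            rcases lt_trichotomy (π ⟨m, hm⟩) (π ⟨m + 1, hk⟩) with h1 | h1 | h1
            · exact h1
            · exact absurd (π.injective h1) (by simp [Fin.ext_iff])
            · exact absurd (hstrict h1) (by simp [h])
        by_cases hcase : jv = m
        · subst hcase; exact hstep
        · rcases ih hm jv (by omega) with h | ⟨h1, h2⟩
          · left
            rcases hstep with hs | ⟨hs, _⟩
            · exact lt_trans h hs
            · exact hs ▸ h
          · rcases hstep with hs | ⟨hs1, hs2⟩
            · left; exact h1 ▸ hs
            · right; exact ⟨h1.trans hs1, lt_trans h2 hs2⟩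
    have := key k.val k.isLt j.val hjk
    simpa using this

lemma card_strictMono (N M : ℕ) :
    ((Finset.univ : Finset (Fin N → Fin M)).filter (fun u => StrictMono u)).card
      = Nat.choose M N := by
  classical
  have key : ((Finset.univ : Finset (Fin N → Fin M)).filter (fun u => StrictMono u)).card
      = ((Finset.univ : Finset (Fin M)).powersetCard N).card := by
    refine Finset.card_bij' (fun u _ => Finset.image u Finset.univ)
      (fun s hs => ⇑(s.orderEmbOfFin ((Finset.mem_powersetCard.mp hs).2))) ?_ ?_ ?_ ?_
    · intro u hu
      simp only [Finset.mem_filter, Finset.mem_univ, true_and] at hu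
      rw [Finset.mem_powersetCard]
      exact ⟨Finset.subset_univ _,
        by rw [Finset.card_image_of_injective _ hu.injective, Finset.card_univ, Fintype.card_fin]⟩
    · intro s hs
      simp only [Finset.mem_filter, Finset.mem_univ, true_and]
      exact (s.orderEmbOfFin _).strictMono
    · intro u hu
      simp only [Finset.mem_filter, Finset.mem_univ, true_and] at hu
      exact (Finset.orderEmbOfFin_unique _
        (fun x => Finset.mem_image_of_mem u (Finset.mem_univ x)) hu).symm
    · intro s hs
      apply Finset.coe_injective
      rw [Finset.coe_image, Finset.coe_univ, Set.image_univ, Finset.range_orderEmbOfFin]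
  rw [key, Finset.card_powersetCard, Finset.card_univ, Fintype.card_fin]

end Aux

lemma strictMono_le_apply {N M : ℕ} (u : Fin N → Fin M) (hu : StrictMono u)
    (k : Fin N) : (k : ℕ) ≤ (u k : ℕ) := by
  have h := chain_gap u hu (k : ℕ) k.isLt 0 (Nat.zero_le _)
  rw [Fin.eta] at h
  omega

lemma strictMono_gap_last {N M : ℕ} (u : Fin N → Fin M) (hu : StrictMono u)
    (k : Fin N) : (u k : ℕ) + (N - 1 - (k : ℕ)) ≤ M - 1 := by
  have hk := k.isLt
  have h := chain_gap u hu (N - 1) (by omega) (k : ℕ) (by omega)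
  rw [Fin.eta] at h
  have h2 : (u ⟨N - 1, by omega⟩ : ℕ) < M := (u ⟨N - 1, by omega⟩).isLt
  omega

/-- The forward map of the bijection. -/
def Fm {n a : ℕ} (π : Equiv.Perm (Fin n)) (w : Fin n → Fin a) (k : Fin n) :
    Fin (a + (n - 1 - (dset π).card)) :=
  ⟨(w (π k) : ℕ) + ((k : ℕ) - Dc π (k : ℕ)), by
    have h0 : (k : ℕ) < n := k.isLt
    have h1 := Dc_bound π (k : ℕ) h0
    have h2 := Dc_le_self π (k : ℕ)
    have h3 := (w (π k)).isLt
    have h4 := dset_card_le π (by omega)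
    omega⟩

/-- The inverse map of the bijection. -/
def Gm {n a : ℕ} (ha : 1 ≤ a) (π : Equiv.Perm (Fin n))
    (u : Fin n → Fin (a + (n - 1 - (dset π).card))) (i : Fin n) : Fin a :=
  ⟨min ((u (π.symm i) : ℕ) + Dc π ((π.symm i : ℕ)) - ((π.symm i : ℕ))) (a - 1), by omega⟩

lemma Gm_apply {n a : ℕ} (ha : 1 ≤ a) (π : Equiv.Perm (Fin n))
    {u : Fin n → Fin (a + (n - 1 - (dset π).card))} (hu : StrictMono u) (i : Fin n) :
    (Gm ha π u i : ℕ) = (u (π.symm i) : ℕ) + Dc π ((π.symm i : ℕ)) - ((π.symm i : ℕ)) := by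
  have h0 : ((π.symm i : ℕ)) < n := (π.symm i).isLt
  have h1 := strictMono_le_apply u hu (π.symm i)
  have h2 := strictMono_gap_last u hu (π.symm i)
  have h3 := Dc_le_card π ((π.symm i : ℕ))
  have h4 := Dc_le_self π ((π.symm i : ℕ))
  have h5 := dset_card_le π (by omega)
  show min _ _ = _
  omega

lemma Gm_apply_pi {n a : ℕ} (ha : 1 ≤ a) (π : Equiv.Perm (Fin n))
    {u : Fin n → Fin (a + (n - 1 - (dset π).card))} (hu : StrictMono u) (k : Fin n) :
    (Gm ha π u (π k) : ℕ) = (u k : ℕ) + Dc π (k : ℕ) - (k : ℕ) := by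
  rw [Gm_apply ha π hu (π k), Equiv.symm_apply_apply]

lemma Fm_strictMono {n a : ℕ} (π : Equiv.Perm (Fin n)) {w : Fin n → Fin a}
    (hw : IsAssoc w π) : StrictMono (Fm π w) := by
  rw [isAssoc_iff_local] at hw
  apply strictMono_of_chain
  intro k hk
  obtain ⟨hle, hstrict⟩ := hw k hk
  have hk' : k < n := by omega
  rw [Fin.lt_def]
  show (w (π ⟨k, hk'⟩) : ℕ) + (k - Dc π k) < (w (π ⟨k + 1, hk⟩) : ℕ) + (k + 1 - Dc π (k + 1))
  have hle' : (w (π ⟨k, hk'⟩) : ℕ) ≤ (w (π ⟨k + 1, hk⟩) : ℕ) := hle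
  have hDs := Dc_succ π k hk'
  have hD1 := Dc_le_self π k
  by_cases hdesc : ∃ h : k + 1 < n, π ⟨k + 1, h⟩ < π ⟨k, hk'⟩
  · obtain ⟨_, hlt⟩ := hdesc
    have hslt : (w (π ⟨k, hk'⟩) : ℕ) < (w (π ⟨k + 1, hk⟩) : ℕ) := hstrict hlt
    rw [if_pos ⟨hk, hlt⟩] at hDs
    omega
  · rw [if_neg hdesc] at hDs
    omega

lemma Gm_isAssoc {n a : ℕ} (ha : 1 ≤ a) (π : Equiv.Perm (Fin n))
    {u : Fin n → Fin (a + (n - 1 - (dset π).card))} (hu : StrictMono u) :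
    IsAssoc (Gm ha π u) π := by
  rw [isAssoc_iff_local]
  intro k hk
  have hk' : k < n := by omega
  have e1 := Gm_apply_pi ha π hu ⟨k, hk'⟩
  have e2 := Gm_apply_pi ha π hu ⟨k + 1, hk⟩
  simp only at e1 e2
  have hlt : (u ⟨k, hk'⟩ : ℕ) < (u ⟨k + 1, hk⟩ : ℕ) := hu (by simp [Fin.lt_def])
  have hgek : (k : ℕ) ≤ (u ⟨k, hk'⟩ : ℕ) := strictMono_le_apply u hu ⟨k, hk'⟩
  have hDs := Dc_succ π k hk'
  have hD1 := Dc_le_self π k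
  constructor
  · rw [Fin.le_def, e1, e2]
    by_cases hdesc : ∃ h : k + 1 < n, π ⟨k + 1, h⟩ < π ⟨k, hk'⟩
    · rw [if_pos hdesc] at hDs; omega
    · rw [if_neg hdesc] at hDs; omega
  · intro hd'
    rw [Fin.lt_def, e1, e2]
    rw [if_pos ⟨hk, hd'⟩] at hDs
    omega

lemma Gm_Fm {n a : ℕ} (ha : 1 ≤ a) (π : Equiv.Perm (Fin n)) (w : Fin n → Fin a) :
    Gm ha π (Fm π w) = w := by
  funext i
  apply Fin.ext
  show min ((Fm π w (π.symm i) : ℕ) + Dc π ((π.symm i : ℕ)) - ((π.symm i : ℕ))) (a - 1) = _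
  have hv : (Fm π w (π.symm i) : ℕ)
      = (w (π (π.symm i)) : ℕ) + (((π.symm i : ℕ)) - Dc π ((π.symm i : ℕ))) := rfl
  rw [hv, Equiv.apply_symm_apply]
  have h1 := Dc_le_self π ((π.symm i : ℕ))
  have h2 := (w i).isLt
  omega

lemma Fm_Gm {n a : ℕ} (ha : 1 ≤ a) (π : Equiv.Perm (Fin n))
    {u : Fin n → Fin (a + (n - 1 - (dset π).card))} (hu : StrictMono u) :
    Fm π (Gm ha π u) = u := by
  funext k
  apply Fin.ext
  show (Gm ha π u (π k) : ℕ) + ((k : ℕ) - Dc π (k : ℕ)) = (u k : ℕ)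
  rw [Gm_apply_pi ha π hu k]
  have h1 := Dc_le_self π (k : ℕ)
  have h2 := strictMono_le_apply u hu k
  omega

theorem main_count (n a : ℕ) (hn : 1 ≤ n) (ha : 1 ≤ a) (π : Equiv.Perm (Fin n)) :
    ((Finset.univ : Finset (Fin n → Fin a)).filter (fun w => IsAssoc w π)).card
      = Nat.choose (a + (n - 1 - (dset π).card)) n := by
  classical
  rw [← card_strictMono n (a + (n - 1 - (dset π).card))]
  refine Finset.card_nbij' (Fm π) (Gm ha π) ?_ ?_ ?_ ?_
  · intro w hw
    simp only [Finset.mem_coe, Finset.mem_filter, Finset.mem_univ, true_and] at hw ⊢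
    exact Fm_strictMono π hw
  · intro u hu
    simp only [Finset.mem_coe, Finset.mem_filter, Finset.mem_univ, true_and] at hu ⊢
    exact Gm_isAssoc ha π hu
  · intro w _
    exact Gm_Fm ha π w
  · intro u hu
    simp only [Finset.mem_coe, Finset.mem_filter, Finset.mem_univ, true_and] at hu
    exact Fm_Gm ha π hu

theorem stmt0 (n a d : ℕ) (hn : 1 ≤ n) (ha : 1 ≤ a)
    (π : Equiv.Perm (Fin n)) (hd : des (fun i => π i) = d) :
    ((Finset.univ : Finset (Fin n → Fin a)).filter (fun w => IsAssoc w π)).card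
        = Nat.choose (a + n - d - 1) n ∧
    (((Finset.univ : Finset (Fin n → Fin a)).filter (fun w => IsAssoc w π)).card : ℝ)
        / (a : ℝ) ^ n
      = (Nat.choose (a + n - d - 1) n : ℝ) / (a : ℝ) ^ n := by
  have hcard : (dset π).card = d := by rw [← des_eq_dset_card]; exact hd
  have hdn : d ≤ n - 1 := hcard ▸ dset_card_le π hn
  have h1 : ((Finset.univ : Finset (Fin n → Fin a)).filter (fun w => IsAssoc w π)).card
      = Nat.choose (a + n - d - 1) n := by
    rw [main_count n a hn ha π, hcard]
    congr 1
    omega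
  exact ⟨h1, by rw [h1]⟩
end

section
/- Let n ≥ 1 and let c_0, c_1, …, c_{n−1} be real numbers. Suppose that for every integer a ≥ 1 the quantity p_a satisfies p_a = Σ_{d=0}^{n−1} (c_d / a^n)·C(a + n − d − 1, n). Then for every d with 0 ≤ d < n, c_d = Σ_{i=0}^{d} (−1)^i · C(n+1, i) · (d+1−i)^n · p_{d+1−i}; that is, c_d = p_{d+1}(d+1)^n − p_d d^n C(n+1,1) + p_{d−1}(d−1)^n C(n+1,2) − ⋯ + (−1)^d p_1 · 1^n · C(n+1, d). -/
lemma lemA (n : ℕ) : ∀ k : ℕ, ∑ i ∈ Finset.range (k+1),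
    (-1:ℝ)^i * (n.choose i) * ((n + k - i).choose n) = 1 := by
  induction n with
  | zero =>
    intro k
    rw [Finset.sum_eq_single 0]
    · simp
    · intro i hi hne
      have h0 : (0:ℕ).choose i = 0 := Nat.choose_eq_zero_of_lt (by omega)
      simp [h0]
    · intro h; exact absurd (Finset.mem_range.mpr (by omega)) h
  | succ n ihn =>
    intro k
    induction k with
    | zero => simp
    | succ k ihk =>
      have hsplit : ∑ i ∈ Finset.range (k+2),
          (-1:ℝ)^i * ((n+1).choose i) * (((n+1) + (k+1) - i).choose (n+1)) =
          (∑ i ∈ Finset.range (k+2),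
            (-1:ℝ)^i * ((n+1).choose i) * (((n+1) + k - i).choose (n+1)))
          + (∑ i ∈ Finset.range (k+2),
            (-1:ℝ)^i * ((n+1).choose i) * (((n+1) + k - i).choose n)) := by
        rw [← Finset.sum_add_distrib]
        apply Finset.sum_congr rfl
        intro i hi
        have hi' : i ≤ k + 1 := by simpa [Nat.lt_succ_iff] using Finset.mem_range.mp hi
        have harg : (n+1) + (k+1) - i = ((n+1)+k-i)+1 := by omega
        rw [harg, Nat.choose_succ_succ]
        push_cast
        ring
      rw [hsplit]
      -- first sum = 1 via ihk
      have h1 : ∑ i ∈ Finset.range (k+2),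
          (-1:ℝ)^i * ((n+1).choose i) * (((n+1) + k - i).choose (n+1)) = 1 := by
        rw [Finset.sum_range_succ]
        have : (n+1) + k - (k+1) = n := by omega
        rw [this]
        simp [Nat.choose_succ_self, ihk]
      -- second sum = 0
      have h2 : ∑ i ∈ Finset.range (k+2),
          (-1:ℝ)^i * ((n+1).choose i) * (((n+1) + k - i).choose n) = 0 := by
        rw [Finset.sum_range_succ']
        have hA1 := ihn (k+1)
        rw [Finset.sum_range_succ'] at hA1
        have hA0 := ihn k
        have hshift : ∀ j ∈ Finset.range (k+1),
            (-1:ℝ)^(j+1) * ((n+1).choose (j+1)) * (((n+1) + k - (j+1)).choose n) =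
            -((-1:ℝ)^j * (n.choose j) * ((n + k - j).choose n))
            - ((-1:ℝ)^j * (n.choose (j+1)) * ((n + k - j).choose n)) := by
          intro j hj
          have : (n+1) + k - (j+1) = n + k - j := by omega
          rw [this, Nat.choose_succ_succ]
          push_cast
          ring
        rw [Finset.sum_congr rfl hshift, Finset.sum_sub_distrib]
        have hshift2 : ∀ j ∈ Finset.range (k+1),
            (-1:ℝ)^(j+1) * (n.choose (j+1)) * ((n + (k+1) - (j+1)).choose n) =
            -((-1:ℝ)^j * (n.choose (j+1)) * ((n + k - j).choose n)) := by
          intro j hj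
          have : n + (k+1) - (j+1) = n + k - j := by omega
          rw [this]; push_cast; ring
        rw [Finset.sum_congr rfl hshift2, Finset.sum_neg_distrib] at hA1
        rw [Finset.sum_neg_distrib]
        simp only [pow_zero, Nat.choose_zero_right, Nat.cast_one, one_mul] at hA1 ⊢
        have hc : n + (k + 1) - 0 = n + 1 + k - 0 := by omega
        rw [hc] at hA1
        linarith [hA0, hA1]
      rw [h1, h2]; ring

lemma lemS (n k : ℕ) (hk : 1 ≤ k) : ∑ i ∈ Finset.range (k+1),
    (-1:ℝ)^i * ((n+1).choose i) * ((n + k - i).choose n) = 0 := by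
  obtain ⟨m, rfl⟩ : ∃ m, k = m + 1 := ⟨k - 1, by omega⟩
  rw [Finset.sum_range_succ']
  have hA1 := lemA n (m+1)
  rw [Finset.sum_range_succ'] at hA1
  have hA0 := lemA n m
  have hshift : ∀ j ∈ Finset.range (m+1),
      (-1:ℝ)^(j+1) * ((n+1).choose (j+1)) * ((n + (m+1) - (j+1)).choose n) =
      -((-1:ℝ)^j * (n.choose j) * ((n + m - j).choose n))
      - ((-1:ℝ)^j * (n.choose (j+1)) * ((n + m - j).choose n)) := by
    intro j hj
    have : n + (m+1) - (j+1) = n + m - j := by omega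
    rw [this, Nat.choose_succ_succ]
    push_cast
    ring
  rw [Finset.sum_congr rfl hshift, Finset.sum_sub_distrib, Finset.sum_neg_distrib]
  have hshift2 : ∀ j ∈ Finset.range (m+1),
      (-1:ℝ)^(j+1) * (n.choose (j+1)) * ((n + (m+1) - (j+1)).choose n) =
      -((-1:ℝ)^j * (n.choose (j+1)) * ((n + m - j).choose n)) := by
    intro j hj
    have : n + (m+1) - (j+1) = n + m - j := by omega
    rw [this]; push_cast; ring
  rw [Finset.sum_congr rfl hshift2, Finset.sum_neg_distrib] at hA1
  simp only [pow_zero, Nat.choose_zero_right, Nat.cast_one, one_mul] at hA1 ⊢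
  linarith [hA0, hA1]

lemma lemD (n d e : ℕ) (hd : d < n) (he : e < n) :
    ∑ i ∈ Finset.range (d+1),
      (-1:ℝ)^i * ((n+1).choose i) * (((d + 1 - i) + n - e - 1).choose n) =
      if e = d then 1 else 0 := by
  rcases le_or_gt e d with hle | hlt
  · -- e ≤ d, set k = d - e
    set k := d - e with hk
    have hsub : Finset.range (k+1) ⊆ Finset.range (d+1) :=
      Finset.range_subset_range.mpr (by omega)
    rw [← Finset.sum_subset hsub (by
      intro i hi hni
      simp only [Finset.mem_range] at hi hni
      have : (d + 1 - i) + n - e - 1 < n := by omega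
      rw [Nat.choose_eq_zero_of_lt this]
      simp)]
    have hcong : ∀ i ∈ Finset.range (k+1),
        (-1:ℝ)^i * ((n+1).choose i) * (((d + 1 - i) + n - e - 1).choose n) =
        (-1:ℝ)^i * ((n+1).choose i) * ((n + k - i).choose n) := by
      intro i hi
      simp only [Finset.mem_range] at hi
      have : (d + 1 - i) + n - e - 1 = n + k - i := by omega
      rw [this]
    rw [Finset.sum_congr rfl hcong]
    rcases Nat.eq_zero_or_pos k with hk0 | hk1
    · have hed : e = d := by omega
      rw [if_pos hed, hk0]
      simp
    · have hed : ¬ e = d := by omega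
      rw [if_neg hed]
      exact lemS n k hk1
  · -- e > d : all terms vanish
    rw [if_neg (by omega)]
    apply Finset.sum_eq_zero
    intro i hi
    simp only [Finset.mem_range] at hi
    have : (d + 1 - i) + n - e - 1 < n := by omega
    rw [Nat.choose_eq_zero_of_lt this]
    simp

theorem stmt1 (n : ℕ) (hn : 1 ≤ n) (c p : ℕ → ℝ)
    (hp : ∀ a : ℕ, 1 ≤ a →
      p a = ∑ d ∈ Finset.range n,
        c d / (a : ℝ) ^ n * (Nat.choose (a + n - d - 1) n : ℝ)) :
    ∀ d < n, c d = ∑ i ∈ Finset.range (d + 1),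
      (-1 : ℝ) ^ i * (Nat.choose (n + 1) i : ℝ) * ((d + 1 - i : ℕ) : ℝ) ^ n
        * p (d + 1 - i) := by
  intro d hd
  have hterm : ∀ i ∈ Finset.range (d+1),
      (-1 : ℝ) ^ i * (Nat.choose (n + 1) i : ℝ) * ((d + 1 - i : ℕ) : ℝ) ^ n
        * p (d + 1 - i) =
      ∑ e ∈ Finset.range n,
        (-1:ℝ)^i * ((n+1).choose i) * c e * (((d + 1 - i) + n - e - 1).choose n) := by
    intro i hi
    simp only [Finset.mem_range] at hi
    have h1 : 1 ≤ d + 1 - i := by omega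
    rw [hp (d+1-i) h1, Finset.mul_sum]
    apply Finset.sum_congr rfl
    intro e he
    have hx : ((d + 1 - i : ℕ) : ℝ) ≠ 0 := by
      have : 0 < d + 1 - i := h1
      positivity
    field_simp
  rw [Finset.sum_congr rfl hterm, Finset.sum_comm]
  have hcong : ∀ e ∈ Finset.range n,
      (∑ i ∈ Finset.range (d+1),
        (-1:ℝ)^i * ((n+1).choose i) * c e * (((d + 1 - i) + n - e - 1).choose n)) =
      c e * (if e = d then 1 else 0) := by
    intro e he
    simp only [Finset.mem_range] at he
    rw [← lemD n d e hd he, Finset.mul_sum]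
    apply Finset.sum_congr rfl
    intro i hi
    ring
  rw [Finset.sum_congr rfl hcong]
  rw [Finset.sum_congr rfl (fun e _ => by rw [mul_ite, mul_one, mul_zero]),
    Finset.sum_ite_eq' (Finset.range n) d c]
  simp [Finset.mem_range.mpr hd]
end

section
/- Let D be a deck of 2n cards with exactly n cards labeled 1 and n labeled 2, and for 1 ≤ i ≤ n let D(i,1) (resp. D(j,2)) denote the position of the i-th card labeled 1 (resp. j-th card labeled 2) in D. Let a ≥ 1 and let (a_1,…,a_{2n}) be a sequence with 0 ≤ a_k < a; set α_i = a_{D(i,1)} and β_j = a_{D(j,2)}. Then the permutation associated to the sequence is a shuffle from the sorted deck 1^n, 2^n to D if and only if: α_i ≤ β_j for all 1 ≤ i, j ≤ n, and moreover α_i < β_j strictly whenever D(j,2) < D(i,1) (i.e., whenever the j-th 2 precedes the i-th 1 in D). -/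
theorem stmt9 (n a : ℕ) (hn : 1 ≤ n) (ha : 1 ≤ a)
    (D : Fin (2 * n) → ℕ) (hD : ∀ i, D i = 1 ∨ D i = 2)
    -- `o i` is the position of the `(i+1)`-st card labeled 1 in `D`,
    -- `t j` is the position of the `(j+1)`-st card labeled 2 in `D`:
    (o t : Fin n → Fin (2 * n)) (ho : StrictMono o) (ht : StrictMono t)
    (hoim : ∀ j : Fin (2 * n), (∃ i, o i = j) ↔ D j = 1)
    (htim : ∀ j : Fin (2 * n), (∃ i, t i = j) ↔ D j = 2)
    (w : Fin (2 * n) → Fin a) (π : Equiv.Perm (Fin (2 * n)))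
    (hw : IsAssoc w π) :
    -- `π` is a shuffle from the sorted deck `1^n, 2^n` to `D` if and only if
    -- every `α_i ≤ β_j` and `α_i < β_j` whenever the `j`-th 2 precedes the
    -- `i`-th 1 in `D` (here `α i = w (o i)` and `β j = w (t j)`):
    ((∀ i, D (π i) = if (i : ℕ) < n then 1 else 2) ↔
      ((∀ i j, w (o i) ≤ w (t j)) ∧ (∀ i j, t j < o i → w (o i) < w (t j)))) := by
  classical
  have hDo : ∀ i, D (o i) = 1 := fun i => (hoim (o i)).mp ⟨i, rfl⟩
  have hDt : ∀ j, D (t j) = 2 := fun j => (htim (t j)).mp ⟨j, rfl⟩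
  have hlt : ∀ j k : Fin (2*n), j < k ↔
      (w (π j) < w (π k) ∨ (w (π j) = w (π k) ∧ π j < π k)) := by
    intro j k
    constructor
    · exact hw j k
    · intro h
      by_contra h'
      rcases (not_lt.mp h').lt_or_eq with hkj | hkj
      · rcases hw k j hkj with g | ⟨g, g'⟩ <;> rcases h with f | ⟨f, f'⟩
        · exact absurd (f.trans g) (lt_irrefl _)
        · exact absurd g (by rw [f]; exact lt_irrefl _)
        · exact absurd f (by rw [g]; exact lt_irrefl _)
        · exact absurd (f'.trans g') (lt_irrefl _)
      · subst hkj
        rcases h with f | ⟨f, f'⟩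
        · exact lt_irrefl _ f
        · exact lt_irrefl _ f'
  constructor
  · -- shuffle → conditions
    intro hsh
    have hpos1 : ∀ i : Fin n, ((π.symm (o i) : Fin (2*n)) : ℕ) < n := by
      intro i
      by_contra hcon
      have := hsh (π.symm (o i))
      rw [Equiv.apply_symm_apply, if_neg hcon, hDo i] at this
      omega
    have hpos2 : ∀ j : Fin n, ¬ ((π.symm (t j) : Fin (2*n)) : ℕ) < n := by
      intro j hcon
      have := hsh (π.symm (t j))
      rw [Equiv.apply_symm_apply, if_pos hcon, hDt j] at this
      omega
    have hL : ∀ (i j : Fin n),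
        w (o i) < w (t j) ∨ (w (o i) = w (t j) ∧ o i < t j) := by
      intro i j
      have hlt' : π.symm (o i) < π.symm (t j) := by
        have h1 := hpos1 i
        have h2 := hpos2 j
        exact Fin.lt_def.mpr (by omega)
      have := (hlt _ _).mp hlt'
      rwa [Equiv.apply_symm_apply, Equiv.apply_symm_apply] at this
    constructor
    · intro i j
      rcases hL i j with h | ⟨h, _⟩
      · exact le_of_lt h
      · exact le_of_eq h
    · intro i j hji
      rcases hL i j with h | ⟨h, h'⟩
      · exact h
      · exact absurd hji (not_lt.mpr (le_of_lt h'))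
  · -- conditions → shuffle
    rintro ⟨hle, hstrict⟩
    have hL : ∀ (i j : Fin n),
        w (o i) < w (t j) ∨ (w (o i) = w (t j) ∧ o i < t j) := by
      intro i j
      rcases (hle i j).lt_or_eq with h | h
      · exact Or.inl h
      · refine Or.inr ⟨h, ?_⟩
        have hne : o i ≠ t j := by
          intro e
          have := hDo i
          rw [e, hDt j] at this
          omega
        have hnlt : ¬ t j < o i := by
          intro hc
          have := hstrict i j hc
          rw [h] at this
          exact lt_irrefl _ this
        exact lt_of_le_of_ne (not_lt.mp hnlt) hne
    have hsymlt : ∀ (i j : Fin n), π.symm (o i) < π.symm (t j) := by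
      intro i j
      apply (hlt _ _).mpr
      rw [Equiv.apply_symm_apply, Equiv.apply_symm_apply]
      exact hL i j
    set A : Finset (Fin (2*n)) := Finset.univ.filter (fun k => D (π k) = 1) with hA
    have hmemA : ∀ k, k ∈ A ↔ D (π k) = 1 := by
      intro k; simp [hA]
    have hcardA : A.card = n := by
      have himg : A.image π = Finset.univ.filter (fun j => D j = 1) := by
        ext j
        simp only [Finset.mem_image, Finset.mem_filter, Finset.mem_univ, true_and, hmemA]
        constructor
        · rintro ⟨k, hk, rfl⟩; exact hk
        · intro hj; exact ⟨π.symm j, by simpa using hj, by simp⟩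
      have h2 : Finset.univ.filter (fun j => D j = 1) = Finset.image o Finset.univ := by
        ext j
        simp only [Finset.mem_filter, Finset.mem_univ, true_and, Finset.mem_image]
        rw [← hoim j]
      have := Finset.card_image_of_injective A π.injective
      rw [himg, h2, Finset.card_image_of_injective _ ho.injective] at this
      simpa using this.symm
    have horder : ∀ a' ∈ A, ∀ b ∉ A, a' < b := by
      intro a' ha' b hb
      have h1 : D (π a') = 1 := (hmemA a').mp ha'
      have h2 : D (π b) = 2 := by
        rcases hD (π b) with h | h
        · exact absurd ((hmemA b).mpr h) hb
        · exact h
      obtain ⟨i, hi⟩ := (hoim (π a')).mpr h1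
      obtain ⟨j, hj⟩ := (htim (π b)).mpr h2
      have := hsymlt i j
      rw [hi, hj, Equiv.symm_apply_apply, Equiv.symm_apply_apply] at this
      exact this
    intro k
    by_cases hk : (k : ℕ) < n
    · rw [if_pos hk]
      by_contra hne
      have hkA : k ∉ A := fun h => hne ((hmemA k).mp h)
      have hsub : A.image Fin.val ⊆ Finset.range k := by
        intro x hx
        simp only [Finset.mem_image] at hx
        obtain ⟨a', ha', rfl⟩ := hx
        exact Finset.mem_range.mpr (horder a' ha' k hkA)
      have := Finset.card_le_card hsub
      rw [Finset.card_image_of_injective _ Fin.val_injective, hcardA,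
        Finset.card_range] at this
      omega
    · rw [if_neg hk]
      rcases hD (π k) with h | h
      · exfalso
        have hkA : k ∈ A := (hmemA k).mpr h
        have hcardC : (Finset.univ \ A).card = n := by
          rw [Finset.card_sdiff_of_subset (Finset.subset_univ _), hcardA]
          simp only [Finset.card_univ, Fintype.card_fin]
          omega
        have hsub : (Finset.univ \ A).image Fin.val ⊆ Finset.Ico (k+1) (2*n) := by
          intro x hx
          simp only [Finset.mem_image, Finset.mem_sdiff, Finset.mem_univ, true_and] at hx
          obtain ⟨b, hb, rfl⟩ := hx
          have := horder k hkA b hb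
          exact Finset.mem_Ico.mpr ⟨this, b.isLt⟩
        have := Finset.card_le_card hsub
        rw [Finset.card_image_of_injective _ Fin.val_injective, hcardC,
          Nat.card_Ico] at this
        have hk2 := k.isLt
        omega
      · exact h
end

section
/- Let n ≥ 1 and let R be the equivalence relation on the set of all decks of 2n cards having exactly n cards labeled 1 and n labeled 2, generated (as reflexive–transitive–symmetric closure) by the basic relation: αβγ ∼ αβ*γ whenever |α| = |γ|, the segment β contains equally many 1's and 2's, and β* is obtained from β by reversing its order and then replacing every 1 by 2 and every 2 by 1. Then the number of equivalence classes of R equals the Catalan number (1/(n+2))·C(2n+2, n+1). -/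
/-- A deck of `2n` cards, each labeled 1 or 2, with exactly `n` cards labeled 1
(and hence exactly `n` labeled 2). -/
def Deck (n : ℕ) : Type :=
  {D : Fin (2 * n) → ℕ //
    (∀ i, D i = 1 ∨ D i = 2) ∧ (Finset.univ.filter (fun i => D i = 1)).card = n}

/-- The basic relation generating `R`: `αβγ ∼ αβ*γ` whenever `|α| = |γ|`, the
segment `β` has equally many 1's and 2's, and `β*` is obtained from `β` by
reversing it and interchanging 1's and 2's.  Here `|α| = |γ| = p`, `|β| = q`. -/
def BasicRel (n : ℕ) (D₁ D₂ : Deck n) : Prop :=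
  ∃ p q : ℕ,
    2 * n = p + q + p ∧
    ((Finset.univ.filter (fun i : Fin (2 * n) =>
        p ≤ (i : ℕ) ∧ (i : ℕ) < p + q ∧ D₁.1 i = 1)).card
      = (Finset.univ.filter (fun i : Fin (2 * n) =>
        p ≤ (i : ℕ) ∧ (i : ℕ) < p + q ∧ D₁.1 i = 2)).card) ∧
    (∀ i : Fin (2 * n), ((i : ℕ) < p ∨ p + q ≤ (i : ℕ)) → D₂.1 i = D₁.1 i) ∧
    (∀ i j : Fin (2 * n), p ≤ (i : ℕ) → (i : ℕ) < p + q →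
      p ≤ (j : ℕ) → (j : ℕ) < p + q → (i : ℕ) + (j : ℕ) = 2 * p + q - 1 →
      D₂.1 i = 3 - D₁.1 j)


namespace Stmt12

variable {n : ℕ}

/-- The ±1 step of a deck at position `i` (0 outside range). -/
def step (A : Deck n) (i : ℕ) : ℤ :=
  if h : i < 2 * n then (if A.1 ⟨i, h⟩ = 1 then 1 else -1) else 0

/-- Partial sum of steps. -/
def ssum (A : Deck n) (k : ℕ) : ℤ := ∑ i ∈ Finset.range k, step A i

/-- The key antisymmetrized path. -/
def t (A : Deck n) (k : ℕ) : ℤ := ssum A k - ssum A (2 * n - k)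

/-- Sign of a balanced (opposite) pair; 0 for a non-balanced pair. -/
def eps (A : Deck n) (k : ℕ) : ℤ :=
  if step A k = - step A (2 * n - 1 - k) then step A k else 0

lemma step_out (A : Deck n) {i : ℕ} (h : 2 * n ≤ i) : step A i = 0 := by
  simp [step, Nat.not_lt.mpr h]

lemma step_pm (A : Deck n) {i : ℕ} (h : i < 2 * n) : step A i = 1 ∨ step A i = -1 := by
  simp only [step, dif_pos h]
  split <;> simp

lemma label_eq (A : Deck n) {i : ℕ} (h : i < 2 * n) :
    A.1 ⟨i, h⟩ = if step A i = 1 then 1 else 2 := by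
  simp only [step, dif_pos h]
  rcases A.2.1 ⟨i, h⟩ with h1 | h2
  · simp [h1]
  · simp [h2]

lemma step_of_swap (A B : Deck n) {i j : ℕ} (hi : i < 2 * n) (hj : j < 2 * n)
    (h : B.1 ⟨i, hi⟩ = 3 - A.1 ⟨j, hj⟩) : step B i = - step A j := by
  simp only [step, dif_pos hi, dif_pos hj]
  rcases A.2.1 ⟨j, hj⟩ with h1 | h1 <;> rw [h1] at h <;> norm_num at h <;>
    rw [h, h1] <;> norm_num

lemma ssum_succ (A : Deck n) (k : ℕ) : ssum A (k + 1) = ssum A k + step A k :=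
  Finset.sum_range_succ _ _

lemma ssum_sub (A : Deck n) {a b : ℕ} (h : a ≤ b) :
    ssum A b - ssum A a = ∑ i ∈ Finset.Ico a b, step A i := by
  rw [Finset.sum_Ico_eq_sub _ h]; simp [ssum]

/-- Key counting identity : a sum over a Fin-filter equals 2·card − length. -/
lemma sum_fin_eq (A : Deck n) (P : ℕ → Prop) [DecidablePred P] :
    ∑ i ∈ Finset.range (2 * n), (if P i then step A i else 0)
      = (Finset.univ.filter (fun i : Fin (2 * n) => P (i : ℕ) ∧ A.1 i = 1)).card
        - (Finset.univ.filter (fun i : Fin (2 * n) => P (i : ℕ) ∧ A.1 i = 2)).card := by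
  rw [← Fin.sum_univ_eq_sum_range (fun i => if P i then step A i else 0)]
  have : ∀ i : Fin (2 * n), (if P (i : ℕ) then step A (i : ℕ) else 0)
      = (if P (i : ℕ) ∧ A.1 i = 1 then (1:ℤ) else 0)
        - (if P (i : ℕ) ∧ A.1 i = 2 then (1:ℤ) else 0) := by
    intro i
    have hi : (i : ℕ) < 2 * n := i.2
    have hs : step A (i : ℕ) = if A.1 i = 1 then 1 else -1 := by
      simp only [step, dif_pos hi]
    rcases A.2.1 i with h1 | h1 <;>
      by_cases hP : P (i : ℕ) <;> simp [hs, h1, hP]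
  rw [Finset.sum_congr rfl (fun i _ => this i)]
  rw [Finset.sum_sub_distrib]
  simp [Finset.sum_boole]

lemma balanced_iff (A : Deck n) (p q : ℕ) (hpq : p + q ≤ 2 * n) :
    ((Finset.univ.filter (fun i : Fin (2 * n) =>
        p ≤ (i : ℕ) ∧ (i : ℕ) < p + q ∧ A.1 i = 1)).card
      = (Finset.univ.filter (fun i : Fin (2 * n) =>
        p ≤ (i : ℕ) ∧ (i : ℕ) < p + q ∧ A.1 i = 2)).card)
    ↔ ssum A (p + q) = ssum A p := by
  have key : ssum A (p + q) - ssum A p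
      = ∑ i ∈ Finset.range (2 * n), (if p ≤ i ∧ i < p + q then step A i else 0) := by
    rw [ssum_sub A (Nat.le_add_right p q), ← Finset.sum_filter]
    apply Finset.sum_congr _ (fun _ _ => rfl)
    ext i
    simp only [Finset.mem_Ico, Finset.mem_filter, Finset.mem_range]
    omega
  have h2 := sum_fin_eq A (fun i => p ≤ i ∧ i < p + q)
  simp only [and_assoc] at h2
  rw [h2] at key
  constructor <;> intro h
  · rw [h] at key; omega
  · omega


lemma card_one_eq (A : Deck n) :
    ((Finset.univ.filter (fun i : Fin (2 * n) => A.1 i = 1)).card : ℤ)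
      - ((Finset.univ.filter (fun i : Fin (2 * n) => A.1 i = 2)).card : ℤ)
      = ssum A (2 * n) := by
  have h2 := sum_fin_eq A (fun _ => True)
  simp only [true_and, if_true] at h2
  rw [← h2, ssum]

lemma ssum_total (A : Deck n) : ssum A (2 * n) = 0 := by
  have h1 := card_one_eq A
  have hc1 : (Finset.univ.filter (fun i : Fin (2 * n) => A.1 i = 1)).card = n := A.2.2
  have hc2 : (Finset.univ.filter (fun i : Fin (2 * n) => A.1 i = 1)).card
      + (Finset.univ.filter (fun i : Fin (2 * n) => ¬ A.1 i = 1)).card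
      = 2 * n := by
    rw [Finset.card_filter_add_card_filter_not]
    simp
  have heq : (Finset.univ.filter (fun i : Fin (2 * n) => ¬ A.1 i = 1))
      = (Finset.univ.filter (fun i : Fin (2 * n) => A.1 i = 2)) := by
    ext i
    simp only [Finset.mem_filter, Finset.mem_univ, true_and]
    rcases A.2.1 i with h | h <;> simp [h]
  rw [heq] at hc2
  omega

lemma ssum_ge (A : Deck n) {k : ℕ} (h : 2 * n ≤ k) : ssum A k = 0 := by
  have : ssum A k = ssum A (2 * n) + ∑ i ∈ Finset.Ico (2 * n) k, step A i := by
    rw [← ssum_sub A h]; ring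
  rw [this, ssum_total]
  rw [Finset.sum_congr rfl (fun i hi => step_out A (Finset.mem_Ico.mp hi).1)]
  simp

lemma t_zero (A : Deck n) : t A 0 = 0 := by
  show ssum A 0 - ssum A (2 * n - 0) = 0
  rw [Nat.sub_zero, ssum_total]
  simp [ssum]

lemma t_n (A : Deck n) : t A n = 0 := by
  simp [t, show 2 * n - n = n by omega]

lemma t_step (A : Deck n) {k : ℕ} (hk : k < n) :
    t A (k + 1) = t A k + step A k + step A (2 * n - 1 - k) := by
  have h1 : ssum A (k + 1) = ssum A k + step A k := ssum_succ A k
  have h2 : ssum A (2 * n - k) = ssum A (2 * n - (k + 1)) + step A (2 * n - 1 - k) := by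
    have e : 2 * n - k = (2 * n - (k + 1)) + 1 := by omega
    rw [e, ssum_succ]
    congr 2
    omega
  simp only [t, h1, h2]
  ring

lemma even_ssum (A : Deck n) (k : ℕ) (hk : k ≤ 2 * n) : Even (ssum A k + k) := by
  induction k with
  | zero => simp [ssum]
  | succ m ih =>
    have hm : m < 2 * n := by omega
    have := ih (by omega)
    rcases this with ⟨r, hr⟩
    rcases step_pm A hm with h | h
    · exact ⟨r + 1, by rw [ssum_succ, h]; push_cast; omega⟩
    · exact ⟨r, by rw [ssum_succ, h]; push_cast; omega⟩

lemma even_t (A : Deck n) {k : ℕ} (hk : k ≤ n) : Even (t A k) := by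
  obtain ⟨r, hr⟩ := even_ssum A k (by omega)
  obtain ⟨s, hs⟩ := even_ssum A (2 * n - k) (by omega)
  refine ⟨r - s + (n : ℤ) - k, ?_⟩
  have hcast : ((2 * n - k : ℕ) : ℤ) = 2 * n - k := by omega
  simp only [t]
  rw [hcast] at hs
  omega

/-- Construct a deck from a label function with zero step-sum. -/
lemma mk_deck (g : Fin (2 * n) → ℕ) (hlab : ∀ i, g i = 1 ∨ g i = 2)
    (hsum : ∑ i ∈ Finset.range (2 * n),
      (if h : i < 2 * n then (if g ⟨i, h⟩ = 1 then (1 : ℤ) else -1) else 0) = 0) :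
    ∃ A : Deck n, A.1 = g := by
  have hcard : (Finset.univ.filter (fun i : Fin (2 * n) => g i = 1)).card = n := by
    set c1 := (Finset.univ.filter (fun i : Fin (2 * n) => g i = 1)).card with hc1
    have hsplit : c1 + (Finset.univ.filter (fun i : Fin (2 * n) => ¬ g i = 1)).card
        = 2 * n := by
      rw [hc1, Finset.card_filter_add_card_filter_not]
      simp
    have hval : ∑ i ∈ Finset.range (2 * n),
        (if h : i < 2 * n then (if g ⟨i, h⟩ = 1 then (1 : ℤ) else -1) else 0)
        = (c1 : ℤ) - ((Finset.univ.filter (fun i : Fin (2 * n) => ¬ g i = 1)).card : ℤ) := by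
      rw [← Fin.sum_univ_eq_sum_range
        (fun i => if h : i < 2 * n then (if g ⟨i, h⟩ = 1 then (1 : ℤ) else -1) else 0)]
      have : ∀ i : Fin (2 * n),
          (if h : (i : ℕ) < 2 * n then (if g ⟨(i : ℕ), h⟩ = 1 then (1 : ℤ) else -1) else 0)
          = (if g i = 1 then (1:ℤ) else 0) - (if ¬ g i = 1 then (1:ℤ) else 0) := by
        intro i
        rw [dif_pos i.2]
        by_cases h : g i = 1 <;> simp [h]
      rw [Finset.sum_congr rfl (fun i _ => this i), Finset.sum_sub_distrib]
      congr 1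
      · simp [Finset.sum_boole, hc1]
      · rw [Finset.sum_boole]
    rw [hval] at hsum
    omega
  exact ⟨⟨g, hlab, hcard⟩, rfl⟩

/-- Reflection of an interval sum. -/
lemma sum_reflect (f : ℕ → ℤ) {a b N : ℕ} (ha : a ≤ b) (hb : b ≤ N) :
    ∑ i ∈ Finset.Ico a b, f (N - 1 - i) = ∑ i ∈ Finset.Ico (N - b) (N - a), f i := by
  apply Finset.sum_nbij' (fun i => N - 1 - i) (fun i => N - 1 - i)
  · intro x hx; simp only [Finset.mem_Ico] at hx ⊢; omega
  · intro x hx; simp only [Finset.mem_Ico] at hx ⊢; omega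
  · intro x hx; simp only [Finset.mem_Ico] at hx; omega
  · intro x hx; simp only [Finset.mem_Ico] at hx; omega
  · intro x hx; rfl

section Rot

variable {A B : Deck n} {a : ℕ}

/-- Hypothesis bundle for `B` being the rotation of `A` on `[a, 2n-a)`. -/
structure IsRot (A B : Deck n) (a : ℕ) : Prop where
  ha : a ≤ n
  hbal : ssum A (2 * n - a) = ssum A a
  hin : ∀ k, a ≤ k → k < 2 * n - a → step B k = - step A (2 * n - 1 - k)
  hout : ∀ k, k < a ∨ 2 * n - a ≤ k → step B k = step A k

namespace IsRot

lemma ssum_lo (h : IsRot A B a) {k : ℕ} (hk : k ≤ a) : ssum B k = ssum A k := by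
  apply Finset.sum_congr rfl
  intro i hi
  exact h.hout i (Or.inl (by simp at hi; omega))

lemma ssum_mid (h : IsRot A B a) {k : ℕ} (hk1 : a ≤ k) (hk2 : k ≤ 2 * n - a) :
    ssum B k = ssum A (2 * n - k) := by
  have e1 : ssum B k = ssum B a + ∑ i ∈ Finset.Ico a k, step B i := by
    rw [← ssum_sub B hk1]; ring
  have e2 : ∑ i ∈ Finset.Ico a k, step B i
      = ∑ i ∈ Finset.Ico a k, - step A (2 * n - 1 - i) := by
    apply Finset.sum_congr rfl
    intro i hi
    simp only [Finset.mem_Ico] at hi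
    exact h.hin i hi.1 (by omega)
  have e3 : ∑ i ∈ Finset.Ico a k, step A (2 * n - 1 - i)
      = ∑ i ∈ Finset.Ico (2 * n - k) (2 * n - a), step A i :=
    sum_reflect (step A) hk1 (by omega)
  have e4 : ∑ i ∈ Finset.Ico (2 * n - k) (2 * n - a), step A i
      = ssum A (2 * n - a) - ssum A (2 * n - k) := (ssum_sub A (by omega)).symm
  rw [e1, e2, Finset.sum_neg_distrib, e3, e4, h.ssum_lo (le_refl a), h.hbal]
  ring

lemma ssum_hi (h : IsRot A B a) {k : ℕ} (hk : 2 * n - a ≤ k) : ssum B k = ssum A k := by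
  have han := h.ha
  have e1 : ssum B k = ssum B (2 * n - a) + ∑ i ∈ Finset.Ico (2 * n - a) k, step B i := by
    rw [← ssum_sub B hk]; ring
  have e2 : ssum B (2 * n - a) = ssum A a := by
    rw [h.ssum_mid (by omega) (le_refl _)]
    congr 1
    omega
  have e3 : ∑ i ∈ Finset.Ico (2 * n - a) k, step B i
      = ∑ i ∈ Finset.Ico (2 * n - a) k, step A i := by
    apply Finset.sum_congr rfl
    intro i hi
    simp only [Finset.mem_Ico] at hi
    exact h.hout i (Or.inr hi.1)
  rw [e1, e2, e3, ← h.hbal]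
  have := ssum_sub A hk
  omega

lemma t_lo (h : IsRot A B a) {k : ℕ} (hk : k < a) : t B k = t A k := by
  have h1 : ssum B k = ssum A k := h.ssum_lo (by omega)
  have h2 : ssum B (2 * n - k) = ssum A (2 * n - k) := h.ssum_hi (by omega)
  simp only [t, h1, h2]

lemma t_mid (h : IsRot A B a) {k : ℕ} (hk1 : a ≤ k) (hk2 : k ≤ n) : t B k = - t A k := by
  have h1 : ssum B k = ssum A (2 * n - k) := h.ssum_mid hk1 (by have := h.ha; omega)
  have h2 : ssum B (2 * n - k) = ssum A (2 * n - (2 * n - k)) :=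
    h.ssum_mid (by have := h.ha; omega) (by omega)
  have e : 2 * n - (2 * n - k) = k := by have := h.ha; omega
  rw [e] at h2
  simp only [t, h1, h2]
  ring

lemma eps_eq (h : IsRot A B a) {k : ℕ} (hk : k < n) : eps B k = eps A k := by
  have han := h.ha
  by_cases hc : k < a
  · have h1 : step B k = step A k := h.hout k (Or.inl hc)
    have h2 : step B (2 * n - 1 - k) = step A (2 * n - 1 - k) :=
      h.hout _ (Or.inr (by omega))
    simp only [eps, h1, h2]
  · push_neg at hc
    have hk2 : k < 2 * n - a := by omega
    have hm1 : a ≤ 2 * n - 1 - k := by omega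
    have hm2 : 2 * n - 1 - k < 2 * n - a := by omega
    have h1 : step B k = - step A (2 * n - 1 - k) := h.hin k hc hk2
    have h2 : step B (2 * n - 1 - k) = - step A k := by
      rw [h.hin _ hm1 hm2]
      congr 2
      omega
    simp only [eps, h1, h2, neg_neg]
    by_cases hcond : step A k = - step A (2 * n - 1 - k)
    · rw [if_pos (by omega), if_pos hcond]
      omega
    · rw [if_neg (by omega), if_neg hcond]

end IsRot

/-- A `BasicRel` move gives a rotation structure. -/
lemma isRot_of_basicRel (h : BasicRel n A B) : ∃ a ≤ n, IsRot A B a := by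
  obtain ⟨p, q, h2n, hbalc, hout, hin⟩ := h
  refine ⟨p, by omega, ?_, ?_, ?_, ?_⟩
  · omega
  · have := (balanced_iff A p q (by omega)).mp hbalc
    rw [show 2 * n - p = p + q by omega]
    exact this
  · intro k hk1 hk2
    have hklt : k < 2 * n := by omega
    have hjlt : 2 * n - 1 - k < 2 * n := by omega
    have := hin ⟨k, hklt⟩ ⟨2 * n - 1 - k, hjlt⟩ hk1 (by simpa using by omega)
      (by simp; omega) (by simp; omega) (by simp; omega)
    exact step_of_swap A B hklt hjlt this
  · intro k hk
    by_cases hklt : k < 2 * n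
    · have := hout ⟨k, hklt⟩ (by simpa using by omega)
      simp only [step, dif_pos hklt, this]
    · rw [step_out A (by omega), step_out B (by omega)]

/-- The move constructor: rotate a deck around a zero of `t`. -/
lemma exists_rot (A : Deck n) (a : ℕ) (ha : a ≤ n) (hta : t A a = 0) :
    ∃ B : Deck n, BasicRel n A B ∧ IsRot A B a := by
  have hbal : ssum A (2 * n - a) = ssum A a := by
    simp only [t] at hta
    omega
  set g : Fin (2 * n) → ℕ := fun i =>
    if a ≤ (i : ℕ) ∧ (i : ℕ) < 2 * n - a then
      3 - A.1 ⟨2 * n - 1 - (i : ℕ), by omega⟩ else A.1 i with hg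
  have hlab : ∀ i, g i = 1 ∨ g i = 2 := by
    intro i
    rw [hg]
    dsimp only
    split
    · rcases A.2.1 ⟨2 * n - 1 - (i : ℕ), by omega⟩ with h | h <;> rw [h] <;> simp
    · exact A.2.1 i
  -- the step function of g
  have hstep : ∀ k (hk : k < 2 * n),
      (if g ⟨k, hk⟩ = 1 then (1:ℤ) else -1)
        = if a ≤ k ∧ k < 2 * n - a then - step A (2 * n - 1 - k) else step A k := by
    intro k hk
    rw [hg]
    dsimp only
    by_cases hc : a ≤ k ∧ k < 2 * n - a
    · simp only [if_pos hc]
      have hjlt : 2 * n - 1 - k < 2 * n := by omega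
      rcases A.2.1 ⟨2 * n - 1 - k, hjlt⟩ with h | h <;>
        · rw [h]
          norm_num
          simp only [step, dif_pos hjlt, h]
          norm_num
    · simp only [if_neg hc]
      simp only [step, dif_pos hk]
  have hsum0 : ∑ i ∈ Finset.range (2 * n),
      (if h : i < 2 * n then (if g ⟨i, h⟩ = 1 then (1 : ℤ) else -1) else 0) = 0 := by
    have e0 : ∑ i ∈ Finset.range (2 * n),
        (if h : i < 2 * n then (if g ⟨i, h⟩ = 1 then (1 : ℤ) else -1) else 0)
        = ∑ i ∈ Finset.range (2 * n),
          (if a ≤ i ∧ i < 2 * n - a then - step A (2 * n - 1 - i) else step A i) := by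
      apply Finset.sum_congr rfl
      intro i hi
      simp only [Finset.mem_range] at hi
      rw [dif_pos hi, hstep i hi]
    have key : ∀ ff : ℕ → ℤ, ∑ i ∈ Finset.range (2 * n), ff i
        = ∑ i ∈ Finset.Ico 0 a, ff i + (∑ i ∈ Finset.Ico a (2 * n - a), ff i
          + ∑ i ∈ Finset.Ico (2 * n - a) (2 * n), ff i) := by
      intro ff
      rw [Finset.range_eq_Ico,
        ← Finset.sum_Ico_consecutive ff (Nat.zero_le a) (show a ≤ 2 * n by omega),
        ← Finset.sum_Ico_consecutive ff (show a ≤ 2 * n - a by omega)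
          (show 2 * n - a ≤ 2 * n by omega)]
    rw [e0, key]
    have p1 : ∑ i ∈ Finset.Ico 0 a,
        (if a ≤ i ∧ i < 2 * n - a then - step A (2 * n - 1 - i) else step A i)
        = ssum A a := by
      rw [← Finset.range_eq_Ico]
      apply Finset.sum_congr rfl
      intro i hi
      simp only [Finset.mem_range] at hi
      rw [if_neg (by omega)]
    have p2 : ∑ i ∈ Finset.Ico a (2 * n - a),
        (if a ≤ i ∧ i < 2 * n - a then - step A (2 * n - 1 - i) else step A i)
        = - (ssum A (2 * n - a) - ssum A a) := by
      rw [Finset.sum_congr rfl (g := fun i => - step A (2 * n - 1 - i))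
        (fun i hi => by simp only [Finset.mem_Ico] at hi; rw [if_pos (by omega)]),
        Finset.sum_neg_distrib, sum_reflect (step A) (show a ≤ 2 * n - a by omega) (by omega),
        show 2 * n - (2 * n - a) = a by omega, ← ssum_sub A (show a ≤ 2 * n - a by omega)]
    have p3 : ∑ i ∈ Finset.Ico (2 * n - a) (2 * n),
        (if a ≤ i ∧ i < 2 * n - a then - step A (2 * n - 1 - i) else step A i)
        = ssum A (2 * n) - ssum A (2 * n - a) := by
      rw [Finset.sum_congr rfl (g := fun i => step A i)
        (fun i hi => by simp only [Finset.mem_Ico] at hi; rw [if_neg (by omega)]),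
        ← ssum_sub A (show 2 * n - a ≤ 2 * n by omega)]
    rw [p1, p2, p3, ssum_total, hbal]
    ring
  obtain ⟨B, hB⟩ := mk_deck g hlab hsum0
  have hstepB : ∀ k, step B k
      = if a ≤ k ∧ k < 2 * n - a then - step A (2 * n - 1 - k) else step A k := by
    intro k
    by_cases hk : k < 2 * n
    · rw [show step B k = (if B.1 ⟨k, hk⟩ = 1 then (1:ℤ) else -1) by
        simp only [step, dif_pos hk], hB, hstep k hk]
    · rw [step_out B (by omega), if_neg (by omega), step_out A (by omega)]
  refine ⟨B, ⟨a, 2 * n - 2 * a, by omega, ?_, ?_, ?_⟩, ?_, hbal, ?_, ?_⟩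
  · apply (balanced_iff A a (2 * n - 2 * a) (by omega)).mpr
    rw [show a + (2 * n - 2 * a) = 2 * n - a by omega, hbal]
  · intro i hi
    rw [hB, hg]
    dsimp only
    rw [if_neg (by omega)]
  · intro i j hi1 hi2 hj1 hj2 hij
    rw [hB, hg]
    dsimp only
    rw [if_pos (by constructor <;> omega)]
    have hji : (⟨2 * n - 1 - (i : ℕ), by omega⟩ : Fin (2 * n)) = j := by
      apply Fin.ext
      simp only
      omega
    rw [hji]
  · exact ha
  · intro k hk1 hk2
    rw [hstepB k, if_pos ⟨hk1, hk2⟩]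
  · intro k hk
    rw [hstepB k, if_neg (by omega)]

end Rot

section Invariance

variable {A B : Deck n}

lemma basic_inv (h : BasicRel n A B) :
    (∀ k ≤ n, (t B k).natAbs = (t A k).natAbs) ∧ (∀ k < n, eps B k = eps A k) := by
  obtain ⟨a, han, hr⟩ := isRot_of_basicRel h
  constructor
  · intro k hk
    by_cases hc : k < a
    · rw [hr.t_lo hc]
    · rw [hr.t_mid (by omega) hk, Int.natAbs_neg]
  · intro k hk
    exact hr.eps_eq hk

lemma eqv_inv (h : Relation.EqvGen (BasicRel n) A B) :
    (∀ k ≤ n, (t B k).natAbs = (t A k).natAbs) ∧ (∀ k < n, eps B k = eps A k) := by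
  induction h with
  | rel x y hxy => exact ⟨(basic_inv hxy).1, (basic_inv hxy).2⟩
  | refl x => exact ⟨fun _ _ => rfl, fun _ _ => rfl⟩
  | symm x y hxy ih => exact ⟨fun k hk => (ih.1 k hk).symm, fun k hk => (ih.2 k hk).symm⟩
  | trans x y z hxy hyz ih1 ih2 =>
      exact ⟨fun k hk => (ih2.1 k hk).trans (ih1.1 k hk),
        fun k hk => (ih2.2 k hk).trans (ih1.2 k hk)⟩

/-- Reconstruction: `t` on `[0,n]` and `eps` on `[0,n)` determine the deck. -/
lemma recon (ht : ∀ k ≤ n, t A k = t B k) (he : ∀ k < n, eps A k = eps B k) : A = B := by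
  have hstep : ∀ k < n, step A k = step B k ∧
      step A (2 * n - 1 - k) = step B (2 * n - 1 - k) := by
    intro k hk
    have hk2 : k < 2 * n := by omega
    have hm2 : 2 * n - 1 - k < 2 * n := by omega
    have hsA := t_step A hk
    have hsB := t_step B hk
    have h1 := ht k (by omega)
    have h2 := ht (k + 1) (by omega)
    have hsum : step A k + step A (2 * n - 1 - k) = step B k + step B (2 * n - 1 - k) := by
      omega
    rcases step_pm A hk2 with ha1 | ha1 <;> rcases step_pm A hm2 with ha2 | ha2 <;>
      rcases step_pm B hk2 with hb1 | hb1 <;> rcases step_pm B hm2 with hb2 | hb2 <;>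
        first
          | (exact ⟨by omega, by omega⟩)
          | (exfalso
             have heA : eps A k = step A k := by
               rw [eps, if_pos (by omega)]
             have heB : eps B k = step B k := by
               rw [eps, if_pos (by omega)]
             have := he k hk
             omega)
  apply Subtype.ext
  funext i
  have hi : (i : ℕ) < 2 * n := i.2
  by_cases hc : (i : ℕ) < n
  · have := (hstep (i : ℕ) hc).1
    rw [show i = (⟨(i : ℕ), hi⟩ : Fin (2 * n)) by apply Fin.ext; rfl,
      label_eq A hi, label_eq B hi, this]
  · have hk : 2 * n - 1 - (i : ℕ) < n := by omega
    have := (hstep _ hk).2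
    rw [show 2 * n - 1 - (2 * n - 1 - (i : ℕ)) = (i : ℕ) by omega] at this
    rw [show i = (⟨(i : ℕ), hi⟩ : Fin (2 * n)) by apply Fin.ext; rfl,
      label_eq A hi, label_eq B hi, this]

/-- Canonicalization: every deck is equivalent to one with nonnegative `t` on `[0,n]`. -/
lemma canon (A : Deck n) :
    ∃ B : Deck n, Relation.EqvGen (BasicRel n) A B ∧ ∀ k ≤ n, 0 ≤ t B k := by
  suffices H : ∀ m : ℕ, ∀ A : Deck n,
      ((Finset.range (n + 1)).filter (fun k => t A k < 0)).card ≤ m →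
      ∃ B : Deck n, Relation.EqvGen (BasicRel n) A B ∧ ∀ k ≤ n, 0 ≤ t B k by
    exact H _ A le_rfl
  intro m
  induction m with
  | zero =>
    intro A hA
    refine ⟨A, Relation.EqvGen.refl A, ?_⟩
    intro k hk
    by_contra hneg
    push_neg at hneg
    have : k ∈ (Finset.range (n + 1)).filter (fun k => t A k < 0) := by
      simp only [Finset.mem_filter, Finset.mem_range]
      exact ⟨by omega, hneg⟩
    have := Finset.card_pos.mpr ⟨k, this⟩
    omega
  | succ m ih =>
    intro A hA
    by_cases hzero : ((Finset.range (n + 1)).filter (fun k => t A k < 0)).card = 0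
    · exact ih A (by omega)
    -- there is a negative value; find the first one
    have hex : ∃ k, k ≤ n ∧ t A k < 0 := by
      rw [Finset.card_eq_zero] at hzero
      obtain ⟨k, hk⟩ := Finset.nonempty_iff_ne_empty.mpr hzero
      simp only [Finset.mem_filter, Finset.mem_range] at hk
      exact ⟨k, by omega, hk.2⟩
    classical
    obtain ⟨b, hbn, hbneg, hbmin⟩ :
        ∃ b, b ≤ n ∧ t A b < 0 ∧ ∀ j, j < b → ¬ (j ≤ n ∧ t A j < 0) :=
      ⟨Nat.find hex, (Nat.find_spec hex).1, (Nat.find_spec hex).2,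
        fun j hj => Nat.find_min hex hj⟩
    have hb0 : b ≠ 0 := by
      intro h
      rw [h, t_zero] at hbneg
      omega
    have hprev : 0 ≤ t A (b - 1) := by
      by_contra hc
      push_neg at hc
      exact hbmin (b - 1) (by omega) ⟨by omega, hc⟩
    -- t (b-1) = 0
    have hstepb := t_step A (k := b - 1) (by omega)
    rw [show b - 1 + 1 = b by omega] at hstepb
    have hs1 := step_pm A (i := b - 1) (by omega)
    have hs2 := step_pm A (i := 2 * n - 1 - (b - 1)) (by omega)
    obtain ⟨r, hr⟩ := even_t A (k := b - 1) (by omega)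
    have hta : t A (b - 1) = 0 := by omega
    -- find first zero at or after b
    have hex2 : ∃ k, b ≤ k ∧ k ≤ n ∧ t A k = 0 := ⟨n, hbn, le_rfl, t_n A⟩
    obtain ⟨b', hbb', hb'n, htb', hb'min⟩ :
        ∃ b', b ≤ b' ∧ b' ≤ n ∧ t A b' = 0 ∧ ∀ j, j < b' → ¬ (b ≤ j ∧ j ≤ n ∧ t A j = 0) :=
      ⟨Nat.find hex2, (Nat.find_spec hex2).1, (Nat.find_spec hex2).2.1,
        (Nat.find_spec hex2).2.2, fun j hj => Nat.find_min hex2 hj⟩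
    have hneg' : ∀ j, b ≤ j → j < b' → t A j < 0 := by
      intro j hj1 hj2
      induction j with
      | zero => omega
      | succ i ihj =>
        by_cases hib : b ≤ i
        · have hi1 : t A i < 0 := ihj (by omega) (by omega)
          obtain ⟨r2, hr2⟩ := even_t A (k := i) (by omega)
          have hstepi := t_step A (k := i) (by omega)
          have hsi1 := step_pm A (i := i) (by omega)
          have hsi2 := step_pm A (i := 2 * n - 1 - i) (by omega)
          have hne : t A (i + 1) ≠ 0 := by
            intro h0
            exact hb'min (i + 1) hj2 ⟨by omega, by omega, h0⟩
          omega
        · have : i + 1 = b := by omega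
          rw [this]
          exact hbneg
    have hbb2 : b < b' := by
      have : b ≠ b' := by
        intro h
        rw [h] at hbneg
        omega
      omega
    -- rotate at b' then at b - 1
    obtain ⟨B₁, hrel1, hrot1⟩ := exists_rot A b' hb'n htb'
    have htB₁ : t B₁ (b - 1) = 0 := by
      rw [hrot1.t_lo (by omega), hta]
    obtain ⟨B₂, hrel2, hrot2⟩ := exists_rot B₁ (b - 1) (by omega) htB₁
    -- compute the t-values of B₂
    have htB₂ : ∀ k ≤ n, t B₂ k = if b - 1 ≤ k ∧ k < b' then - t A k else t A k := by
      intro k hk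
      by_cases h1 : k < b - 1
      · rw [hrot2.t_lo h1, hrot1.t_lo (by omega), if_neg (by omega)]
      · by_cases h2 : k < b'
        · rw [hrot2.t_mid (by omega) hk, hrot1.t_lo h2, if_pos (by omega)]
        · rw [hrot2.t_mid (by omega) hk, hrot1.t_mid (by omega) hk, neg_neg,
            if_neg (by omega)]
    -- the measure decreases
    have hsub : ((Finset.range (n + 1)).filter (fun k => t B₂ k < 0))
        ⊂ ((Finset.range (n + 1)).filter (fun k => t A k < 0)) := by
      constructor
      · intro k hk
        simp only [Finset.mem_filter, Finset.mem_range] at hk ⊢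
        obtain ⟨hk1, hk2⟩ := hk
        rw [htB₂ k (by omega)] at hk2
        refine ⟨hk1, ?_⟩
        by_cases hc : b - 1 ≤ k ∧ k < b'
        · rw [if_pos hc] at hk2
          exfalso
          by_cases hcb : k < b
          · have : k = b - 1 := by omega
            rw [this, hta] at hk2
            omega
          · have := hneg' k (by omega) hc.2
            omega
        · rwa [if_neg hc] at hk2
      · intro hsup
        have hbmem : b ∈ (Finset.range (n + 1)).filter (fun k => t A k < 0) := by
          simp only [Finset.mem_filter, Finset.mem_range]
          exact ⟨by omega, hbneg⟩
        have := hsup hbmem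
        simp only [Finset.mem_filter, Finset.mem_range] at this
        rw [htB₂ b (by omega), if_pos (by omega)] at this
        omega
    have hcard := Finset.card_lt_card hsub
    obtain ⟨B, hrelB, hposB⟩ := ih B₂ (by omega)
    exact ⟨B, Relation.EqvGen.trans _ _ _
      (Relation.EqvGen.trans _ _ _ (Relation.EqvGen.rel _ _ hrel1) (Relation.EqvGen.rel _ _ hrel2))
      hrelB, hposB⟩

end Invariance

section Dyck

open DyckStep

variable {A B : Deck n}

/-- Canonical (absolute value) path. -/
def c (A : Deck n) (k : ℕ) : ℕ := (t A k).natAbs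

lemma c_zero (A : Deck n) : c A 0 = 0 := by simp [c, t_zero]
lemma c_n (A : Deck n) : c A n = 0 := by simp [c, t_n]

lemma c_step (A : Deck n) {k : ℕ} (hk : k < n) :
    (c A (k + 1) = c A k + 2 ∧ step A k + step A (2 * n - 1 - k) ≠ 0)
    ∨ (c A k = c A (k + 1) + 2 ∧ step A k + step A (2 * n - 1 - k) ≠ 0)
    ∨ (c A (k + 1) = c A k ∧ step A k + step A (2 * n - 1 - k) = 0) := by
  have h := t_step A hk
  obtain ⟨r, hr⟩ := even_t A (k := k) (by omega)
  have s1 := step_pm A (i := k) (by omega)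
  have s2 := step_pm A (i := 2 * n - 1 - k) (by omega)
  simp only [c]
  omega

/-- Encoding of the pair `(k, 2n-1-k)` as two Dyck steps. -/
def pairEnc (A : Deck n) (k : ℕ) : List DyckStep :=
  if c A (k + 1) = c A k + 2 then [U, U]
  else if c A k = c A (k + 1) + 2 then [D, D]
  else if eps A k = 1 then [U, D] else [D, U]

/-- The interior of the Dyck word of `A`. -/
def mid (A : Deck n) : ℕ → List DyckStep
  | 0 => []
  | m + 1 => mid A m ++ pairEnc A m

def hgt (l : List DyckStep) : ℤ := (l.count U : ℤ) - (l.count D : ℤ)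

lemma hgt_append (l l' : List DyckStep) : hgt (l ++ l') = hgt l + hgt l' := by
  simp only [hgt, List.count_append]
  push_cast
  ring

lemma pairEnc_length (A : Deck n) (k : ℕ) : (pairEnc A k).length = 2 := by
  unfold pairEnc
  split_ifs <;> rfl

lemma mid_length (A : Deck n) (m : ℕ) : (mid A m).length = 2 * m := by
  induction m with
  | zero => rfl
  | succ m ih => simp [mid, List.length_append, ih, pairEnc_length]; omega

/-- The four mutually exclusive shapes of `pairEnc`. -/
lemma pairEnc_cases (A : Deck n) {k : ℕ} (hk : k < n) :
    (pairEnc A k = [U, U] ∧ c A (k + 1) = c A k + 2 ∧ eps A k = 0)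
    ∨ (pairEnc A k = [D, D] ∧ c A k = c A (k + 1) + 2 ∧ eps A k = 0)
    ∨ (pairEnc A k = [U, D] ∧ c A (k + 1) = c A k ∧ eps A k = 1)
    ∨ (pairEnc A k = [D, U] ∧ c A (k + 1) = c A k ∧ eps A k = -1) := by
  have s1 := step_pm A (i := k) (by omega)
  rcases c_step A hk with ⟨h1, h2⟩ | ⟨h1, h2⟩ | ⟨h1, h2⟩
  · refine Or.inl ⟨by rw [pairEnc, if_pos h1], h1, ?_⟩
    rw [eps, if_neg (by omega)]
  · refine Or.inr (Or.inl ⟨by rw [pairEnc, if_neg (by omega), if_pos h1], h1, ?_⟩)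
    rw [eps, if_neg (by omega)]
  · have heps : eps A k = step A k := by
      rw [eps, if_pos (by omega)]
    rcases s1 with hs | hs
    · refine Or.inr (Or.inr (Or.inl ⟨?_, h1, by omega⟩))
      rw [pairEnc, if_neg (by omega), if_neg (by omega), if_pos (by omega)]
    · refine Or.inr (Or.inr (Or.inr ⟨?_, h1, by omega⟩))
      rw [pairEnc, if_neg (by omega), if_neg (by omega), if_neg (by omega)]

lemma hgt_pairEnc (A : Deck n) {k : ℕ} (hk : k < n) :
    hgt (pairEnc A k) = (c A (k + 1) : ℤ) - (c A k : ℤ) := by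
  rcases pairEnc_cases A hk with ⟨h1, h2, -⟩ | ⟨h1, h2, -⟩ | ⟨h1, h2, -⟩ | ⟨h1, h2, -⟩ <;>
    rw [h1] <;> simp [hgt] <;> omega

lemma hgt_mid (A : Deck n) {m : ℕ} (hm : m ≤ n) : hgt (mid A m) = (c A m : ℤ) := by
  induction m with
  | zero => simp [mid, hgt, c_zero]
  | succ m ih =>
    rw [mid, hgt_append, ih (by omega), hgt_pairEnc A (by omega)]
    ring

lemma hgt_take1_pairEnc (A : Deck n) (k : ℕ) : -1 ≤ hgt ((pairEnc A k).take 1) := by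
  unfold pairEnc
  split_ifs <;> simp [hgt]

lemma mid_nonneg (A : Deck n) {m : ℕ} (hm : m ≤ n) :
    ∀ i, 0 ≤ 1 + hgt ((mid A m).take i) := by
  induction m with
  | zero => intro i; simp [mid, hgt]
  | succ m ih =>
    intro i
    rw [mid, List.take_append, hgt_append]
    by_cases hc : i ≤ 2 * m
    · rw [show i - (mid A m).length = 0 by rw [mid_length]; omega, List.take_zero]
      have h0 : hgt ([] : List DyckStep) = 0 := by simp [hgt]
      rw [h0, add_zero]
      exact ih (by omega) i
    · rw [List.take_of_length_le (by rw [mid_length]; omega), hgt_mid A (by omega)]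
      set j := i - (mid A m).length with hj
      have hj1 : 1 ≤ j := by rw [hj, mid_length]; omega
      by_cases hj2 : 2 ≤ j
      · rw [List.take_of_length_le (by rw [pairEnc_length]; omega),
          hgt_pairEnc A (by omega)]
        have : (0:ℤ) ≤ c A (m + 1) := by positivity
        omega
      · rw [show j = 1 by omega]
        have := hgt_take1_pairEnc A m
        have : (0:ℤ) ≤ c A m := by positivity
        have := hgt_take1_pairEnc A m
        omega

/-- The Dyck word associated to a deck. -/
def dyckOf (A : Deck n) : DyckWord where
  toList := (U :: mid A n) ++ [D]
  count_U_eq_count_D := by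
    have h : hgt ((U :: mid A n) ++ [D]) = 0 := by
      rw [show (U :: mid A n) = [U] ++ mid A n from rfl, hgt_append, hgt_append,
        hgt_mid A le_rfl, c_n]
      simp [hgt]
    simp only [hgt] at h
    omega
  count_D_le_count_U i := by
    suffices h : 0 ≤ hgt (((U :: mid A n) ++ [D]).take i) by
      simp only [hgt] at h
      omega
    match i with
    | 0 => simp [hgt]
    | (i' + 1) =>
      rw [show ((U :: mid A n) ++ [D]) = U :: (mid A n ++ [D]) from rfl]
      rw [List.take_succ_cons, show (U :: (mid A n ++ [D]).take i') = [U] ++ (mid A n ++ [D]).take i' from rfl,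
        hgt_append, List.take_append, hgt_append]
      have h1 := mid_nonneg A le_rfl i'
      have h2 : hgt [U] = 1 := by simp [hgt]
      by_cases hc : i' ≤ 2 * n
      · rw [show i' - (mid A n).length = 0 by rw [mid_length]; omega, List.take_zero]
        have h0 : hgt ([] : List DyckStep) = 0 := by simp [hgt]
        rw [h0, h2]
        omega
      · rw [List.take_of_length_le (by rw [mid_length]; omega), hgt_mid A le_rfl, c_n]
        have h3 : -1 ≤ hgt (([D] : List DyckStep).take (i' - (mid A n).length)) := by
          match hix : i' - (mid A n).length with
          | 0 => simp [hgt]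
          | (x+1) =>
            rw [show ([D] : List DyckStep).take (x+1) = [D] by
              simp [List.take_succ_cons]]
            simp [hgt]
        omega

lemma dyckOf_semilength (A : Deck n) : (dyckOf A).semilength = n + 1 := by
  have hl : (dyckOf A).toList.length = 2 * n + 2 := by
    show ((U :: mid A n) ++ [D]).length = 2 * n + 2
    simp [List.length_append, mid_length]
  have := (dyckOf A).two_mul_semilength_eq_length
  omega

end Dyck

section Inj

open DyckStep

variable {A B : Deck n}

lemma pairEnc_congr (hc : ∀ k ≤ n, c A k = c B k) (he : ∀ k < n, eps A k = eps B k)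
    {k : ℕ} (hk : k < n) : pairEnc A k = pairEnc B k := by
  unfold pairEnc
  rw [hc k (by omega), hc (k + 1) (by omega), he k hk]

lemma mid_congr (hc : ∀ k ≤ n, c A k = c B k) (he : ∀ k < n, eps A k = eps B k)
    {m : ℕ} (hm : m ≤ n) : mid A m = mid B m := by
  induction m with
  | zero => rfl
  | succ m ih => rw [mid, mid, ih (by omega), pairEnc_congr hc he (by omega)]

lemma dyckOf_congr (hc : ∀ k ≤ n, c A k = c B k) (he : ∀ k < n, eps A k = eps B k) :
    dyckOf A = dyckOf B := by
  apply DyckWord.ext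
  show (U :: mid A n) ++ [D] = (U :: mid B n) ++ [D]
  rw [mid_congr hc he le_rfl]

lemma mid_take (A : Deck n) : ∀ {m m₂ : ℕ}, m ≤ m₂ → (mid A m₂).take (2 * m) = mid A m := by
  intro m m₂ h
  induction m₂ with
  | zero =>
    have : m = 0 := by omega
    simp [this, mid]
  | succ m₂ ih =>
    rcases Nat.eq_or_lt_of_le h with he | hlt
    · rw [he]
      apply List.take_of_length_le
      rw [mid_length]
    · rw [mid, List.take_append_of_le_length (by rw [mid_length]; omega), ih (by omega)]

lemma dyckOf_eqv (h : Relation.EqvGen (BasicRel n) A B) : dyckOf A = dyckOf B := by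
  obtain ⟨h1, h2⟩ := eqv_inv h
  exact (dyckOf_congr (fun k hk => h1 k hk) (fun k hk => h2 k hk)).symm

lemma pairEnc_of_dyckOf_eq (h : dyckOf A = dyckOf B) : ∀ k < n, pairEnc A k = pairEnc B k := by
  have hlist : (U :: mid A n) ++ [D] = (U :: mid B n) ++ [D] := congrArg DyckWord.toList h
  have hmid : mid A n = mid B n := by
    have := List.append_inj_left hlist (by simp [mid_length])
    exact List.cons_injective this  -- maybe wrong; fix if needed
  suffices H : ∀ m ≤ n, ∀ k < m, pairEnc A k = pairEnc B k by
    exact fun k hk => H n le_rfl k hk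
  intro m
  induction m with
  | zero => intro _ k hk; omega
  | succ m ih =>
    intro hm k hk
    have hmm : mid A (m + 1) = mid B (m + 1) := by
      rw [← mid_take A (show m + 1 ≤ n by omega), ← mid_take B (show m + 1 ≤ n by omega), hmid]
    have hsplit : mid A m = mid B m ∧ pairEnc A m = pairEnc B m := by
      rw [mid, mid] at hmm
      constructor
      · exact List.append_inj_left hmm (by simp [mid_length])
      · exact List.append_inj_right hmm (by simp [mid_length])
    by_cases hkm : k < m
    · exact ih (by omega) k hkm
    · have : k = m := by omega
      rw [this]
      exact hsplit.2

lemma inv_of_pairEnc (hpe : ∀ k < n, pairEnc A k = pairEnc B k) :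
    (∀ k ≤ n, c A k = c B k) ∧ (∀ k < n, eps A k = eps B k) := by
  have hc : ∀ k ≤ n, c A k = c B k := by
    intro k
    induction k with
    | zero => intro _; rw [c_zero, c_zero]
    | succ k ihk =>
      intro hk
      have ihck := ihk (by omega)
      have hA := pairEnc_cases A (show k < n by omega)
      have hB := pairEnc_cases B (show k < n by omega)
      have hek := hpe k (by omega)
      rcases hA with ⟨a1, a2, a3⟩ | ⟨a1, a2, a3⟩ | ⟨a1, a2, a3⟩ | ⟨a1, a2, a3⟩ <;>
        rcases hB with ⟨b1, b2, b3⟩ | ⟨b1, b2, b3⟩ | ⟨b1, b2, b3⟩ | ⟨b1, b2, b3⟩ <;>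
          rw [a1, b1] at hek <;> first | omega | (simp at hek)
  refine ⟨hc, ?_⟩
  intro k hk
  have hA := pairEnc_cases A hk
  have hB := pairEnc_cases B hk
  have hek := hpe k hk
  rcases hA with ⟨a1, a2, a3⟩ | ⟨a1, a2, a3⟩ | ⟨a1, a2, a3⟩ | ⟨a1, a2, a3⟩ <;>
    rcases hB with ⟨b1, b2, b3⟩ | ⟨b1, b2, b3⟩ | ⟨b1, b2, b3⟩ | ⟨b1, b2, b3⟩ <;>
      rw [a1, b1] at hek <;> first | omega | (simp at hek)

/-- Main injectivity result. -/
lemma eqv_of_dyckOf_eq (h : dyckOf A = dyckOf B) : Relation.EqvGen (BasicRel n) A B := by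
  obtain ⟨A', hA', hApos⟩ := canon A
  obtain ⟨B', hB', hBpos⟩ := canon B
  have hAeq : dyckOf A' = dyckOf A := dyckOf_eqv (Relation.EqvGen.symm _ _ hA')
  have hBeq : dyckOf B' = dyckOf B := dyckOf_eqv (Relation.EqvGen.symm _ _ hB')
  have h' : dyckOf A' = dyckOf B' := by rw [hAeq, hBeq, h]
  obtain ⟨hc', he'⟩ := inv_of_pairEnc (pairEnc_of_dyckOf_eq h')
  have hAB : A' = B' := by
    apply recon
    · intro k hk
      have h1 : t A' k = (c A' k : ℤ) := by
        rw [c, Int.natAbs_of_nonneg (hApos k hk)]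
      have h2 : t B' k = (c B' k : ℤ) := by
        rw [c, Int.natAbs_of_nonneg (hBpos k hk)]
      rw [h1, h2, hc' k hk]
    · exact he'
  exact Relation.EqvGen.trans _ _ _ hA'
    (hAB ▸ Relation.EqvGen.symm _ _ hB')

end Inj

section Surj

open DyckStep

def val : DyckStep → ℤ
  | U => 1
  | D => -1

def enc : DyckStep → ℕ
  | U => 1
  | D => 2

lemma val_pm (s : DyckStep) : val s = 1 ∨ val s = -1 := by cases s <;> simp [val]

lemma hgt_single (s : DyckStep) : hgt [s] = val s := by cases s <;> simp [hgt, val]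

lemma take_getD (l : List DyckStep) (m : ℕ) (h : m < l.length) :
    l.take (m + 1) = l.take m ++ [l.getD m U] := by
  rw [List.take_succ]
  congr 1
  rw [List.getD_eq_getElem l U h]
  simp [List.getElem?_eq_getElem h]

/-- Height of prefixes, via positions. -/
lemma hgt_take_eq (l : List DyckStep) : ∀ m, m ≤ l.length →
    hgt (l.take m) = ∑ i ∈ Finset.range m, val (l.getD i U) := by
  intro m
  induction m with
  | zero => intro _; simp [hgt]
  | succ m ih =>
    intro hm
    rw [take_getD l m (by omega), hgt_append, ih (by omega), Finset.sum_range_succ, hgt_single]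

variable {w : DyckWord}

def Hw (w : DyckWord) (m : ℕ) : ℤ := ∑ i ∈ Finset.range m, val (w.toList.getD i U)

lemma wlen (hw : w.semilength = n + 1) : w.toList.length = 2 * n + 2 := by
  have := w.two_mul_semilength_eq_length
  omega

lemma Hw_succ (m : ℕ) : Hw w (m + 1) = Hw w m + val (w.toList.getD m U) :=
  Finset.sum_range_succ _ _

lemma Hw_nonneg (hw : w.semilength = n + 1) {m : ℕ} (hm : m ≤ 2 * n + 2) : 0 ≤ Hw w m := by
  rw [Hw, ← hgt_take_eq _ m (by rw [wlen hw]; omega)]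
  have := w.count_D_le_count_U m
  simp only [hgt]
  omega

lemma Hw_total (hw : w.semilength = n + 1) : Hw w (2 * n + 2) = 0 := by
  rw [Hw, ← hgt_take_eq _ _ (by rw [wlen hw])]
  rw [show (2 * n + 2) = w.toList.length by rw [wlen hw], List.take_length]
  have := w.count_U_eq_count_D
  simp only [hgt]
  omega

lemma Hw_even (m : ℕ) : Even (Hw w m + m) := by
  induction m with
  | zero => simp [Hw]
  | succ m ih =>
    obtain ⟨r, hr⟩ := ih
    rcases val_pm (w.toList.getD m U) with h | h
    · exact ⟨r + 1, by rw [Hw_succ, h]; push_cast; omega⟩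
    · exact ⟨r, by rw [Hw_succ, h]; push_cast; omega⟩

lemma Hw_odd_pos (hw : w.semilength = n + 1) {k : ℕ} (hk : 2 * k + 1 ≤ 2 * n + 2) :
    1 ≤ Hw w (2 * k + 1) := by
  have h1 := Hw_nonneg hw hk
  obtain ⟨r, hr⟩ := Hw_even (w := w) (2 * k + 1)
  push_cast at hr
  omega

lemma w_ne_nil (hw : w.semilength = n + 1) : w.toList ≠ [] := by
  intro h
  have := wlen hw
  rw [h] at this
  simp at this

lemma w_head (hw : w.semilength = n + 1) : w.toList.getD 0 U = U := by
  have hne := w_ne_nil hw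
  have h0 : 0 < w.toList.length := by rw [wlen hw]; omega
  rw [List.getD_eq_getElem _ _ h0]
  rw [List.getElem_zero]
  exact w.head_eq_U _

lemma w_last (hw : w.semilength = n + 1) : w.toList.getD (2 * n + 1) U = D := by
  have hne := w_ne_nil hw
  have h1 : w.toList.getLast hne = w.toList.getD (w.toList.length - 1) U := by
    rw [List.getLast_eq_getElem, List.getD_eq_getElem]
  rw [show (2 * n + 1) = w.toList.length - 1 by rw [wlen hw]; omega, ← h1, w.getLast_eq_D]


lemma pairsum (f : ℕ → ℤ) : ∀ m : ℕ,
    ∑ k ∈ Finset.range m, (f (2 * k + 1) + f (2 * k + 2))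
      = ∑ i ∈ Finset.Ico 1 (2 * m + 1), f i := by
  intro m
  induction m with
  | zero => simp
  | succ m ih =>
    rw [Finset.sum_range_succ, ih]
    conv_rhs => rw [show 2 * (m + 1) + 1 = (2 * m + 1) + 1 + 1 by ring,
      Finset.sum_Ico_succ_top (by omega), Finset.sum_Ico_succ_top (by omega)]
    ring

/-- The total `val`-sum of the interior of `w` is zero. -/
lemma interior_sum_zero (hw : w.semilength = n + 1) :
    ∑ k ∈ Finset.range n, (val (w.toList.getD (2 * k + 1) U) + val (w.toList.getD (2 * k + 2) U))
      = 0 := by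
  have hp := pairsum (fun i => val (w.toList.getD i U)) n
  rw [hp]
  have h0 := Hw_total hw
  rw [Hw, Finset.range_eq_Ico,
    ← Finset.sum_Ico_consecutive _ (show (0:ℕ) ≤ 1 by omega) (show 1 ≤ 2 * n + 2 by omega),
    ← Finset.sum_Ico_consecutive _ (show (1:ℕ) ≤ 2 * n + 1 by omega)
      (show 2 * n + 1 ≤ 2 * n + 2 by omega)] at h0
  have hA : ∑ i ∈ Finset.Ico 0 1, val (w.toList.getD i U) = 1 := by
    rw [show Finset.Ico 0 1 = {0} by rfl, Finset.sum_singleton, w_head hw]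
    rfl
  have hB : ∑ i ∈ Finset.Ico (2 * n + 1) (2 * n + 2), val (w.toList.getD i U) = -1 := by
    rw [show (2 * n + 2) = (2 * n + 1) + 1 by ring, Finset.sum_Ico_succ_top (by omega),
      Finset.Ico_self, Finset.sum_empty, w_last hw]
    rfl
  rw [hA, hB] at h0
  omega

/-- Surjectivity: every Dyck word of semilength `n+1` arises from a deck. -/
lemma dyckOf_surj (w : DyckWord) (hw : w.semilength = n + 1) :
    ∃ A : Deck n, dyckOf A = w := by
  classical
  set L := w.toList with hL
  set g : Fin (2 * n) → ℕ := fun i =>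
    if (i : ℕ) < n then enc (L.getD (2 * (i : ℕ) + 1) U)
    else enc (L.getD (2 * (2 * n - 1 - (i : ℕ)) + 2) U) with hg
  have hlab : ∀ i, g i = 1 ∨ g i = 2 := by
    intro i
    rw [hg]
    dsimp only
    split <;> rcases (L.getD _ U) <;> simp [enc]
  have hgval : ∀ (k : ℕ) (hk : k < 2 * n),
      (if g ⟨k, hk⟩ = 1 then (1:ℤ) else -1)
        = if k < n then val (L.getD (2 * k + 1) U)
          else val (L.getD (2 * (2 * n - 1 - k) + 2) U) := by
    intro k hk
    rw [hg]
    dsimp only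
    by_cases hkn : k < n
    · simp only [if_pos hkn]
      rcases (L.getD (2 * k + 1) U) <;> simp [enc, val]
    · simp only [if_neg hkn]
      rcases (L.getD (2 * (2 * n - 1 - k) + 2) U) <;> simp [enc, val]
  have hsum : ∑ i ∈ Finset.range (2 * n),
      (if h : i < 2 * n then (if g ⟨i, h⟩ = 1 then (1 : ℤ) else -1) else 0) = 0 := by
    have e0 : ∑ i ∈ Finset.range (2 * n),
        (if h : i < 2 * n then (if g ⟨i, h⟩ = 1 then (1 : ℤ) else -1) else 0)
        = ∑ i ∈ Finset.range (2 * n),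
          (if i < n then val (L.getD (2 * i + 1) U)
            else val (L.getD (2 * (2 * n - 1 - i) + 2) U)) := by
      apply Finset.sum_congr rfl
      intro i hi
      simp only [Finset.mem_range] at hi
      rw [dif_pos hi, hgval i hi]
    rw [e0, Finset.range_eq_Ico,
      ← Finset.sum_Ico_consecutive _ (Nat.zero_le n) (show n ≤ 2 * n by omega)]
    have p1 : ∑ i ∈ Finset.Ico 0 n,
        (if i < n then val (L.getD (2 * i + 1) U)
          else val (L.getD (2 * (2 * n - 1 - i) + 2) U))
        = ∑ i ∈ Finset.Ico 0 n, val (L.getD (2 * i + 1) U) := by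
      apply Finset.sum_congr rfl
      intro i hi
      simp only [Finset.mem_Ico] at hi
      rw [if_pos hi.2]
    have p2 : ∑ i ∈ Finset.Ico n (2 * n),
        (if i < n then val (L.getD (2 * i + 1) U)
          else val (L.getD (2 * (2 * n - 1 - i) + 2) U))
        = ∑ i ∈ Finset.Ico 0 n, val (L.getD (2 * i + 2) U) := by
      rw [Finset.sum_congr rfl (g := fun i => val (L.getD (2 * (2 * n - 1 - i) + 2) U))
        (fun i hi => by simp only [Finset.mem_Ico] at hi; rw [if_neg (by omega)])]
      have := sum_reflect (fun j => val (L.getD (2 * j + 2) U)) (show n ≤ 2 * n by omega)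
        (le_refl (2 * n))
      rw [this, show 2 * n - 2 * n = 0 by omega, show 2 * n - n = n by omega]
    rw [p1, p2, ← Finset.sum_add_distrib]
    rw [← Finset.range_eq_Ico]
    exact interior_sum_zero hw
  obtain ⟨A, hA⟩ := mk_deck g hlab hsum
  -- step values of A
  have hstepA : ∀ k, k < n → step A k = val (L.getD (2 * k + 1) U)
      ∧ step A (2 * n - 1 - k) = val (L.getD (2 * k + 2) U) := by
    intro k hk
    constructor
    · have hk2 : k < 2 * n := by omega
      rw [show step A k = (if A.1 ⟨k, hk2⟩ = 1 then (1:ℤ) else -1) by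
        simp only [step, dif_pos hk2], hA, hgval k hk2, if_pos hk]
    · have hk2 : 2 * n - 1 - k < 2 * n := by omega
      rw [show step A (2 * n - 1 - k) = (if A.1 ⟨2 * n - 1 - k, hk2⟩ = 1 then (1:ℤ) else -1) by
        simp only [step, dif_pos hk2], hA, hgval _ hk2, if_neg (by omega),
        show 2 * n - 1 - (2 * n - 1 - k) = k by omega]
  -- t-values of A
  have ht : ∀ k ≤ n, t A k = Hw w (2 * k + 1) - 1 := by
    intro k
    induction k with
    | zero =>
      intro _
      rw [t_zero, show 2 * 0 + 1 = 1 by ring, show Hw w 1 = Hw w 0 + val (w.toList.getD 0 U) from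
        Hw_succ 0, w_head hw]
      simp [Hw, val]
    | succ k ihk =>
      intro hk
      have hkn : k < n := by omega
      have hH1 : Hw w (2 * k + 2) = Hw w (2 * k + 1) + val (L.getD (2 * k + 1) U) := by
        rw [show (2 * k + 2) = (2 * k + 1) + 1 by ring, Hw_succ]
      have hH2 : Hw w (2 * (k + 1) + 1) = Hw w (2 * k + 2) + val (L.getD (2 * k + 2) U) := by
        rw [show (2 * (k + 1) + 1) = (2 * k + 2) + 1 by ring, Hw_succ]
      rw [t_step A hkn, ihk (by omega), (hstepA k hkn).1, (hstepA k hkn).2, hH2, hH1]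
      ring
  have htpos : ∀ k ≤ n, 0 ≤ t A k := by
    intro k hk
    rw [ht k hk]
    have := Hw_odd_pos hw (k := k) (by omega)
    omega
  have hcval : ∀ k ≤ n, (c A k : ℤ) = Hw w (2 * k + 1) - 1 := by
    intro k hk
    rw [c, Int.natAbs_of_nonneg (htpos k hk), ht k hk]
  -- pairEnc matches the letters of w
  have hpair : ∀ k, k < n → pairEnc A k = [L.getD (2 * k + 1) U, L.getD (2 * k + 2) U] := by
    intro k hk
    have hstep1 := (hstepA k hk).1
    have hstep2 := (hstepA k hk).2
    have htk := ht k (by omega)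
    have htk1 := ht (k + 1) (by omega)
    have hck := hcval k (by omega)
    have hck1 := hcval (k + 1) (by omega)
    have hts := t_step A hk
    have hH1 : Hw w (2 * k + 2) = Hw w (2 * k + 1) + val (L.getD (2 * k + 1) U) := by
      rw [show (2 * k + 2) = (2 * k + 1) + 1 by ring, Hw_succ]
    have hH2 : Hw w (2 * (k + 1) + 1) = Hw w (2 * k + 2) + val (L.getD (2 * k + 2) U) := by
      rw [show (2 * (k + 1) + 1) = (2 * k + 2) + 1 by ring, Hw_succ]
    cases hx : L.getD (2 * k + 1) U <;> cases hy : L.getD (2 * k + 2) U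
    · -- U U
      rw [hx] at hstep1 hH1
      rw [hy] at hstep2 hH2
      simp only [val] at hstep1 hstep2 hH1 hH2
      rw [pairEnc, if_pos (by omega)]
    · -- U D
      rw [hx] at hstep1 hH1
      rw [hy] at hstep2 hH2
      simp only [val] at hstep1 hstep2 hH1 hH2
      rw [pairEnc, if_neg (by omega), if_neg (by omega), if_pos (by
        rw [eps, if_pos (by omega), hstep1])]
    · -- D U
      rw [hx] at hstep1 hH1
      rw [hy] at hstep2 hH2
      simp only [val] at hstep1 hstep2 hH1 hH2
      rw [pairEnc, if_neg (by omega), if_neg (by omega), if_neg (by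
        rw [eps, if_pos (by omega), hstep1]; omega)]
    · -- D D
      rw [hx] at hstep1 hH1
      rw [hy] at hstep2 hH2
      simp only [val] at hstep1 hstep2 hH1 hH2
      rw [pairEnc, if_neg (by omega), if_pos (by omega)]
  -- the interior of w
  have hmid : ∀ m, m ≤ n → mid A m = (L.drop 1).take (2 * m) := by
    intro m
    induction m with
    | zero => intro _; simp [mid]
    | succ m ihm =>
      intro hm
      have hlen1 : (L.drop 1).length = 2 * n + 1 := by
        rw [List.length_drop, hL, wlen hw]
        omega
      have hd1 : ∀ j, j < 2 * n + 1 → (L.drop 1).getD j U = L.getD (1 + j) U := by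
        intro j hj
        rw [List.getD_eq_getElem _ _ (by omega), List.getD_eq_getElem _ _ (by
          rw [hL, wlen hw]; omega), List.getElem_drop]
      have e3 : (L.drop 1).take (2 * (m + 1))
          = (L.drop 1).take (2 * m) ++ [L.getD (2 * m + 1) U, L.getD (2 * m + 2) U] := by
        have q1 : (L.drop 1).take ((2 * m) + 1)
            = (L.drop 1).take (2 * m) ++ [(L.drop 1).getD (2 * m) U] :=
          take_getD _ _ (by rw [hlen1]; omega)
        have q2 : (L.drop 1).take ((2 * m + 1) + 1)
            = (L.drop 1).take (2 * m + 1) ++ [(L.drop 1).getD (2 * m + 1) U] :=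
          take_getD _ _ (by rw [hlen1]; omega)
        rw [show 2 * (m + 1) = (2 * m + 1) + 1 by ring, q2, q1,
          hd1 (2 * m) (by omega), hd1 (2 * m + 1) (by omega),
          show 1 + 2 * m = 2 * m + 1 by ring, show 1 + (2 * m + 1) = 2 * m + 2 by ring]
        simp
      rw [mid, ihm (by omega), hpair m (by omega), e3]
  refine ⟨A, ?_⟩
  apply DyckWord.ext
  show (U :: mid A n) ++ [D] = w.toList
  rw [hmid n le_rfl]
  have hlenL : L.length = 2 * n + 2 := by rw [hL, wlen hw]
  have e0 : L = L.getD 0 U :: L.drop 1 := by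
    have hlt : 0 < L.length := by rw [hL, wlen hw]; omega
    have h := List.drop_eq_getElem_cons (l := L) hlt
    rw [List.getD_eq_getElem _ _ hlt]
    simpa using h
  have e1 : L.drop 1 = (L.drop 1).take (2 * n) ++ (L.drop 1).drop (2 * n) :=
    (List.take_append_drop _ _).symm
  have e2 : (L.drop 1).drop (2 * n) = [L.getD (2 * n + 1) U] := by
    have hlt : 2 * n + 1 < L.length := by rw [hL, wlen hw]; omega
    have h := List.drop_eq_getElem_cons (l := L) hlt
    rw [List.drop_drop, Nat.add_comm 1 (2 * n), List.getD_eq_getElem _ _ hlt, h]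
    rw [List.drop_eq_nil_of_le (show L.length ≤ 2 * n + 1 + 1 by rw [hL, wlen hw])]
  conv_rhs => rw [← hL, e0, e1, e2]
  rw [w_head hw, w_last hw]
  simp

end Surj

end Stmt12

theorem stmt12 (n : ℕ) (hn : 1 ≤ n) :
    (Nat.card (Quotient (Relation.EqvGen.setoid (BasicRel n))) : ℚ)
      = (Nat.choose (2 * n + 2) (n + 1) : ℚ) / ((n : ℚ) + 2) := by
  classical
  have hcount : Nat.card (Quotient (Relation.EqvGen.setoid (BasicRel n))) = catalan (n + 1) := by
    have hF : ∀ A B : Deck n, Relation.EqvGen (BasicRel n) A B →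
        (⟨Stmt12.dyckOf A, Stmt12.dyckOf_semilength A⟩ :
          {p : DyckWord // p.semilength = n + 1})
        = ⟨Stmt12.dyckOf B, Stmt12.dyckOf_semilength B⟩ :=
      fun A B hAB => Subtype.ext (Stmt12.dyckOf_eqv hAB)
    let F : Quotient (Relation.EqvGen.setoid (BasicRel n)) →
        {p : DyckWord // p.semilength = n + 1} :=
      Quotient.lift (fun A => (⟨Stmt12.dyckOf A, Stmt12.dyckOf_semilength A⟩ :
        {p : DyckWord // p.semilength = n + 1})) hF
    have hbij : Function.Bijective F := by
      constructor
      · intro x y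
        induction x using Quotient.inductionOn with | _ A =>
        induction y using Quotient.inductionOn with | _ B =>
        intro h
        apply Quotient.sound
        exact Stmt12.eqv_of_dyckOf_eq (congrArg Subtype.val h)
      · rintro ⟨w, hw⟩
        obtain ⟨A, hA⟩ := Stmt12.dyckOf_surj w hw
        exact ⟨Quotient.mk _ A, Subtype.ext hA⟩
    rw [Nat.card_eq_of_bijective F hbij, Nat.card_eq_fintype_card,
      DyckWord.card_dyckWord_semilength_eq_catalan]
  rw [hcount]
  have hc := catalan_eq_centralBinom_div (n + 1)
  have hdvd : (n + 2) ∣ (n + 1).centralBinom := Nat.succ_dvd_centralBinom (n + 1)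
  have hcb : (n + 1).centralBinom = (2 * n + 2).choose (n + 1) := by
    rw [Nat.centralBinom, show 2 * (n + 1) = 2 * n + 2 by ring]
  obtain ⟨m, hm⟩ := hdvd
  rw [hc, hm, Nat.mul_div_cancel_left _ (by omega : 0 < n + 2), ← hcb, hm]
  push_cast
  have h2 : ((n : ℚ) + 2) ≠ 0 := by positivity
  field_simp
end

section
/- For every integer n ≥ 0, Σ_{k=0}^{⌊n/2⌋} 2^{n−2k} · (1/(k+1)) · C(2k, k) · C(n, 2k) = (1/(n+2)) · C(2n+2, n+1); that is, the sum over k of 2^{n−2k} times the k-th Catalan number times C(n, 2k) equals the (n+1)-st Catalan number. -/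
open Finset

private def fq (n k : ℕ) : ℚ :=
  (2:ℚ)^n / 4^k * ((Nat.choose (2*k) k : ℚ) / (k+1)) * (Nat.choose n (2*k) : ℚ)

private def gq (n k : ℕ) : ℚ :=
  8 * k * (2:ℚ)^n / 4^k * (Nat.choose (2*k) k : ℚ) * (Nat.choose (n+1) (2*k) : ℚ)

private lemma central (k : ℕ) :
    (k+1) * Nat.choose (2*k+2) (k+1) = 2*(2*k+1) * Nat.choose (2*k) k := by
  have h1 : Nat.choose (2*k+2) (k+1) = 2 * Nat.choose (2*k+1) (k+1) := by
    rw [show 2*k+2 = (2*k+1)+1 from rfl, Nat.choose_succ_succ', ← Nat.choose_symm_half k,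
      Nat.two_mul]
    omega
  have h3 := Nat.add_one_mul_choose_eq (2*k) k
  calc (k+1)*Nat.choose (2*k+2) (k+1) = 2*(Nat.choose (2*k+1) (k+1)*(k+1)) := by rw [h1]; ring
  _ = 2*((2*k+1)*Nat.choose (2*k) k) := by rw [← h3]
  _ = _ := by ring

private lemma keyterm (n k : ℕ) :
    ((n:ℚ)+1) * ((4*n+6) * fq n k - (n+3) * fq (n+1) k) = gq n (k+1) - gq n k := by
  have hQ : ((k:ℚ)+1) * (Nat.choose (2*k+2) (k+1) : ℚ)
      = 2*(2*(k:ℚ)+1) * (Nat.choose (2*k) k : ℚ) := by exact_mod_cast central k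
  have hD : ((n:ℚ)+1) * (Nat.choose n (2*k) : ℚ)
      = (Nat.choose (n+1) (2*k+1) : ℚ) * (2*(k:ℚ)+1) := by
    have := Nat.add_one_mul_choose_eq n (2*k)
    exact_mod_cast this
  have h2e : 2*(k+1) = 2*k+2 := by ring
  rcases le_or_gt (2*k) n with h | h
  · -- main case 2k ≤ n
    have hc1 : ((n + 1 - 2*k : ℕ) : ℚ) = (n:ℚ)+1-2*k := by
      rw [Nat.cast_sub (by omega)]; push_cast; ring
    have hc2 : ((n - 2*k : ℕ) : ℚ) = (n:ℚ)-2*k := by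
      rw [Nat.cast_sub h]; push_cast; ring
    have hE : (Nat.choose (n+1) (2*k+2) : ℚ) * (2*(k:ℚ)+2)
        = (Nat.choose (n+1) (2*k+1) : ℚ) * ((n:ℚ) - 2*k) := by
      have h0 := Nat.choose_succ_right_eq (n+1) (2*k+1)
      rw [show 2*k+1+1 = 2*k+2 from by omega, show n+1-(2*k+1) = n-2*k from by omega] at h0
      have h1 := congrArg (Nat.cast (R := ℚ)) h0
      push_cast [hc2] at h1
      linarith [h1]
    have hB : (Nat.choose (n+1) (2*k+1) : ℚ) * (2*(k:ℚ)+1)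
        = (Nat.choose (n+1) (2*k) : ℚ) * ((n:ℚ)+1 - 2*k) := by
      have h0 := Nat.choose_succ_right_eq (n+1) (2*k)
      have h1 := congrArg (Nat.cast (R := ℚ)) h0
      push_cast [hc1] at h1
      linarith [h1]
    have hk1 : ((k:ℚ)+1) ≠ 0 := by positivity
    have hn1 : ((n:ℚ)+1) ≠ 0 := by positivity
    have hk2 : (2*(k:ℚ)+2) ≠ 0 := by positivity
    have hnk : ((n:ℚ)+1-2*k) ≠ 0 := by
      have : (2*(k:ℚ)) ≤ n := by exact_mod_cast h
      nlinarith
    have hA' : (Nat.choose n (2*k) : ℚ)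
        = (Nat.choose (n+1) (2*k+1) : ℚ) * (2*(k:ℚ)+1) / ((n:ℚ)+1) := by
      field_simp; linarith [hD]
    have hB' : (Nat.choose (n+1) (2*k) : ℚ)
        = (Nat.choose (n+1) (2*k+1) : ℚ) * (2*(k:ℚ)+1) / ((n:ℚ)+1-2*k) := by
      field_simp; linarith [hB]
    have hE' : (Nat.choose (n+1) (2*k+2) : ℚ)
        = (Nat.choose (n+1) (2*k+1) : ℚ) * ((n:ℚ)-2*k) / (2*(k:ℚ)+2) := by
      field_simp; linarith [hE]
    have hQ' : (Nat.choose (2*k+2) (k+1) : ℚ)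
        = 2*(2*(k:ℚ)+1) * (Nat.choose (2*k) k : ℚ) / ((k:ℚ)+1) := by
      field_simp; linarith [hQ]
    simp only [fq, gq, h2e]
    push_cast
    rw [hA', hB', hE', hQ']
    have hnk2 : ((n:ℚ)+1-k*2) ≠ 0 := by contrapose! hnk; linarith
    field_simp
    ring
  · rcases eq_or_lt_of_le (show n+1 ≤ 2*k from by omega) with heq | hlt
    · -- 2k = n+1
      have hA0 : Nat.choose n (2*k) = 0 := Nat.choose_eq_zero_of_lt (by omega)
      have hE0 : Nat.choose (n+1) (2*k+2) = 0 := Nat.choose_eq_zero_of_lt (by omega)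
      have hB1 : Nat.choose (n+1) (2*k) = 1 := by rw [← heq]; exact Nat.choose_self _
      have hncast : (n:ℚ) = 2*(k:ℚ) - 1 := by
        have : ((n:ℚ)) + 1 = 2*(k:ℚ) := by exact_mod_cast heq
        linarith
      have hk1 : ((k:ℚ)+1) ≠ 0 := by positivity
      simp only [fq, gq, h2e, hA0, hE0, hB1, Nat.cast_zero, Nat.cast_one, hncast]
      field_simp
      ring
    · -- 2k ≥ n+2
      have hA0 : Nat.choose n (2*k) = 0 := Nat.choose_eq_zero_of_lt (by omega)
      have hB0 : Nat.choose (n+1) (2*k) = 0 := Nat.choose_eq_zero_of_lt (by omega)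
      have hE0 : Nat.choose (n+1) (2*k+2) = 0 := Nat.choose_eq_zero_of_lt (by omega)
      simp [fq, gq, h2e, hA0, hB0, hE0]

private lemma recq (n : ℕ) :
    (4*(n:ℚ)+6) * (∑ k ∈ range (n+2), fq n k)
      = ((n:ℚ)+3) * (∑ k ∈ range (n+3), fq (n+1) k) := by
  have hlast : fq (n+1) (n+2) = 0 := by
    simp [fq, Nat.choose_eq_zero_of_lt (show n+1 < 2*(n+2) by omega)]
  have hS1 : ∑ k ∈ range (n+3), fq (n+1) k = ∑ k ∈ range (n+2), fq (n+1) k := by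
    rw [Finset.sum_range_succ, hlast, add_zero]
  have hg0 : gq n 0 = 0 := by simp [gq]
  have hgend : gq n (n+2) = 0 := by
    simp [gq, Nat.choose_eq_zero_of_lt (show n+1 < 2*(n+2) by omega)]
  have key : ∑ k ∈ range (n+2),
      ((n:ℚ)+1) * ((4*n+6) * fq n k - (n+3) * fq (n+1) k) = 0 := by
    calc ∑ k ∈ range (n+2), ((n:ℚ)+1) * ((4*n+6) * fq n k - (n+3) * fq (n+1) k)
        = ∑ k ∈ range (n+2), (gq n (k+1) - gq n k) :=
          Finset.sum_congr rfl (fun k _ => keyterm n k)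
      _ = gq n (n+2) - gq n 0 := Finset.sum_range_sub (gq n) (n+2)
      _ = 0 := by rw [hg0, hgend]; ring
  have key2 : ((n:ℚ)+1) * ((4*n+6) * (∑ k ∈ range (n+2), fq n k)
      - (n+3) * (∑ k ∈ range (n+2), fq (n+1) k)) = 0 := by
    rw [← key, Finset.mul_sum, Finset.mul_sum, ← Finset.sum_sub_distrib, ← Finset.mul_sum]
  have hn1 : ((n:ℚ)+1) ≠ 0 := by positivity
  rw [hS1]
  rcases mul_eq_zero.mp key2 with h | h
  · exact absurd h hn1
  · linarith [h]

private lemma closedq (n : ℕ) :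
    ∑ k ∈ range (n+2), fq n k = (Nat.choose (2*n+2) (n+1) : ℚ) / ((n:ℚ)+2) := by
  induction n with
  | zero => norm_num [fq, Finset.sum_range_succ]
  | succ n ih =>
    have hrec := recq n
    rw [ih] at hrec
    have hc : ((n:ℚ)+2) * (Nat.choose (2*n+4) (n+2) : ℚ)
        = 2*(2*(n:ℚ)+3) * (Nat.choose (2*n+2) (n+1) : ℚ) := by
      have h0 := central (n+1)
      rw [show 2*(n+1)+2 = 2*n+4 from by omega, show 2*(n+1) = 2*n+2 from by omega] at h0
      exact_mod_cast h0
    have hn2 : ((n:ℚ)+2) ≠ 0 := by positivity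
    have hn3 : ((n:ℚ)+3) ≠ 0 := by positivity
    rw [show 2*(n+1)+2 = 2*n+4 from by omega, show (n+1)+1 = n+2 from rfl,
      show n+1+2 = n+3 from rfl]
    push_cast
    rw [eq_div_iff (by positivity)]
    have : (∑ k ∈ range (n+1+2), fq (n+1) k) * ((n:ℚ)+3)
        = (4*(n:ℚ)+6) * ((Nat.choose (2*n+2) (n+1) : ℚ) / ((n:ℚ)+2)) := by
      rw [show n+1+2 = n+3 from rfl]; linarith [hrec]
    rw [show ((n:ℚ)+1+2) = (n:ℚ)+3 from by ring, this]
    field_simp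
    linarith [hc]

theorem stmt13 (n : ℕ) :
    ∑ k ∈ Finset.range (n / 2 + 1),
        (2 : ℚ) ^ (n - 2 * k) * (1 / ((k : ℚ) + 1)) *
          (Nat.choose (2 * k) k : ℚ) * (Nat.choose n (2 * k) : ℚ)
      = (Nat.choose (2 * n + 2) (n + 1) : ℚ) / ((n : ℚ) + 2) := by
  have hsub : Finset.range (n/2+1) ⊆ Finset.range (n+2) := by
    intro k hk; simp only [Finset.mem_range] at *; omega
  have h1 : ∑ k ∈ range (n+2), fq n k = ∑ k ∈ range (n/2+1), fq n k := by
    refine (Finset.sum_subset hsub ?_).symm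
    intro k _ hk
    simp only [Finset.mem_range, not_lt] at hk
    simp [fq, Nat.choose_eq_zero_of_lt (show n < 2*k by omega)]
  have h2 : ∀ k ∈ Finset.range (n/2+1),
      (2 : ℚ) ^ (n - 2 * k) * (1 / ((k : ℚ) + 1)) *
        (Nat.choose (2 * k) k : ℚ) * (Nat.choose n (2 * k) : ℚ) = fq n k := by
    intro k hk
    simp only [Finset.mem_range] at hk
    have hkn : 2*k ≤ n := by omega
    have hpow : (2:ℚ)^(n-2*k) = 2^n / 4^k := by
      rw [eq_div_iff (by positivity), show (4:ℚ) = 2^2 from by norm_num, ← pow_mul,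
        ← pow_add, show n-2*k + 2*k = n from by omega]
    rw [fq, hpow]
    ring
  rw [Finset.sum_congr rfl h2, ← h1, closedq]
end
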